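/- arXiv:1208.2783 — 4 statements merged into one kernel-verified Lean document; each statement's English description precedes it below -/
import Mathlib

section
/- Let Σ be a finite alphabet with |Σ| ≥ 2. For cellular automata c, d on Σ^ℤ with common radius r, define the difference set D(c,d) = {w ∈ Σ^{2r+1} | the central cells of c(w) and d(w) differ} and δ(c,d) = |D(c,d)| / |Σ|^{2r+1}. Then δ is a metric on the set of cellular automata (in particular, its value does not depend on the choice of common radius r, δ(c,d) = 0 iff c = d, and the triangle inequality holds). -/
open MeasureTheory Filter Function

section BasicDefs

variable {A : Type}

/-- `f` admits a local rule of radius `r`: there is `F` depending only on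
coordinates in `[-r, r]` such that `f x i = F (σ^i x)`. -/
def HasRadius (r : ℕ) (f : (ℤ → A) → (ℤ → A)) : Prop :=
  ∃ F : (ℤ → A) → A,
    (∀ x y : ℤ → A, (∀ j : ℤ, |j| ≤ (r : ℤ) → x j = y j) → F x = F y) ∧
    ∀ (x : ℤ → A) (i : ℤ), f x i = F fun j => x (i + j)

/-- A cellular automaton is a map admitting a local rule of some radius. -/
def IsCA (f : (ℤ → A) → (ℤ → A)) : Prop := ∃ r, HasRadius r f

/-- The minimal radius of a cellular automaton. -/
noncomputable def rad (f : (ℤ → A) → (ℤ → A)) : ℕ := sInf {r : ℕ | HasRadius r f}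

/-- Centered words of radius `r`. -/
def Word (A : Type) (r : ℕ) := (Finset.Icc (-(r : ℤ)) (r : ℤ) : Finset ℤ) → A

/-- The difference set of `c` and `d` for radius `r`: centered words of radius `r`
on which the images of `c` and `d` differ at the central cell. -/
def diffSet (r : ℕ) (c d : (ℤ → A) → (ℤ → A)) : Set (Word A r) :=
  {w | ∃ x : ℤ → A, (∀ j : (Finset.Icc (-(r : ℤ)) (r : ℤ) : Finset ℤ), x j.1 = w j) ∧
        c x 0 ≠ d x 0}

/-- The shift map. -/
def shift (x : ℤ → A) : ℤ → A := fun i => x (i + 1)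

/-- Preimages of the centered word `v` of radius `n` under the word function of `c`
used with radius `r`: centered words `u` of radius `n + r` such that some (equivalently,
by the radius assumption, every) configuration extending `u` maps under `c` to a
configuration extending `v` in its central part. -/
def wordPreimages (c : (ℤ → A) → (ℤ → A)) (n r : ℕ) (v : Word A n) :
    Set (Word A (n + r)) :=
  {u | ∃ x : ℤ → A,
        (∀ j : (Finset.Icc (-((n + r : ℕ) : ℤ)) ((n + r : ℕ) : ℤ) : Finset ℤ), x j.1 = u j) ∧
        ∀ j : (Finset.Icc (-(n : ℤ)) (n : ℤ) : Finset ℤ), c x j.1 = v j}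

-- The Cantor metric on configurations.
open Classical in
noncomputable def dC (x y : ℤ → A) : ℝ :=
  ∑' i : ℤ, if x i ≠ y i then (2 : ℝ) ^ (-|i|) else 0

/-- The Besicovitch pseudodistance on configurations. -/
noncomputable def dB (x y : ℤ → A) : ℝ :=
  limsup (fun n : ℕ =>
    (({i : ℤ | |i| ≤ (n : ℤ) ∧ x i ≠ y i}.ncard : ℝ)) / (2 * (n : ℝ) + 1)) atTop

end BasicDefs

section FintypeDefs

variable {A : Type} [Fintype A]

/-- The normalized size of the difference set for radius `r`. -/
noncomputable def deltaR (r : ℕ) (c d : (ℤ → A) → (ℤ → A)) : ℝ :=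
  (diffSet r c d).ncard / (Fintype.card A : ℝ) ^ (2 * r + 1)

/-- The uniform Bernoulli distance between two cellular automata (computed with the
common radius `max (rad c) (rad d)`; by radius-independence this is the canonical value). -/
noncomputable def delta (c d : (ℤ → A) → (ℤ → A)) : ℝ :=
  deltaR (max (rad c) (rad d)) c d

end FintypeDefs

section MeasureDefs

variable {A : Type} [MeasurableSpace A]

/-- The pseudometric on cellular automata induced by the measure `μ`:
the measure of the cylinder of the difference set, i.e. of the set of
configurations on which `c` and `d` differ at coordinate `0`. -/
noncomputable def deltaMu (μ : Measure (ℤ → A)) (c d : (ℤ → A) → (ℤ → A)) : ℝ :=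
  (μ {x | c x 0 ≠ d x 0}).toReal

/-- `c` preserves the measure `μ`. -/
def Preserves (μ : Measure (ℤ → A)) (c : (ℤ → A) → (ℤ → A)) : Prop :=
  ∀ B : Set (ℤ → A), MeasurableSet B → μ (c ⁻¹' B) = μ B

/-- `μ` is shift-invariant. -/
def ShiftInvariant (μ : Measure (ℤ → A)) : Prop :=
  ∀ B : Set (ℤ → A), MeasurableSet B → μ (shift ⁻¹' B) = μ B

end MeasureDefs


section AuxProof

variable {A : Type}

noncomputable instance wordFintype [Fintype A] (r : ℕ) : Fintype (Word A r) :=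
  inferInstanceAs (Fintype ((Finset.Icc (-(r : ℤ)) (r : ℤ) : Finset ℤ) → A))

instance wordFinite [Fintype A] (r : ℕ) : Finite (Word A r) := Finite.of_fintype _

lemma card_word [Fintype A] (r : ℕ) :
    Fintype.card (Word A r) = Fintype.card A ^ (2 * r + 1) := by
  have h1 : Fintype.card (Word A r)
      = Fintype.card A ^ (Finset.Icc (-(r : ℤ)) (r : ℤ)).card := by
    rw [show Fintype.card (Word A r)
        = Fintype.card ((Finset.Icc (-(r : ℤ)) (r : ℤ) : Finset ℤ) → A) from rfl,
      Fintype.card_fun, Fintype.card_coe]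
  rw [h1, Int.card_Icc]
  congr 1
  omega

lemma eq_at_zero_of_agree {r : ℕ} {c : (ℤ → A) → (ℤ → A)} (hc : HasRadius r c)
    {x y : ℤ → A} (h : ∀ j : ℤ, |j| ≤ (r : ℤ) → x j = y j) : c x 0 = c y 0 := by
  obtain ⟨F, hF, hloc⟩ := hc
  rw [hloc, hloc]
  apply hF
  intro j hj
  simpa using h j hj

lemma I_subset {r r' : ℕ} (h : r ≤ r') :
    Finset.Icc (-(r : ℤ)) (r : ℤ) ⊆ Finset.Icc (-(r' : ℤ)) (r' : ℤ) :=
  Finset.Icc_subset_Icc (by omega) (by omega)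

/-- Restriction of a centered word of radius `r'` to radius `r ≤ r'`. -/
def res {r r' : ℕ} (h : r ≤ r') (u : Word A r') : Word A r :=
  fun j => u ⟨j.1, I_subset h j.2⟩

lemma diffSet_eq_preimage {r r' : ℕ} (h : r ≤ r') {c d : (ℤ → A) → (ℤ → A)}
    (hc : HasRadius r c) (hd : HasRadius r d) :
    diffSet r' c d = res h ⁻¹' diffSet r c d := by
  classical
  ext u
  constructor
  · rintro ⟨x, hx, hne⟩
    exact ⟨x, fun j => hx ⟨j.1, I_subset h j.2⟩, hne⟩
  · rintro ⟨x, hx, hne⟩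
    refine ⟨fun i => if hi : i ∈ Finset.Icc (-(r' : ℤ)) (r' : ℤ) then u ⟨i, hi⟩ else x i,
      ?_, ?_⟩
    · intro j
      exact dif_pos j.2
    · have hagree : ∀ j : ℤ, |j| ≤ (r : ℤ) →
          (fun i => if hi : i ∈ Finset.Icc (-(r' : ℤ)) (r' : ℤ) then u ⟨i, hi⟩ else x i) j
            = x j := by
        intro j hj
        have hjr : j ∈ Finset.Icc (-(r : ℤ)) (r : ℤ) := by
          rw [Finset.mem_Icc]; rw [abs_le] at hj; omega
        have hjr' : j ∈ Finset.Icc (-(r' : ℤ)) (r' : ℤ) := I_subset h hjr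
        simp only [dif_pos hjr']
        exact (hx ⟨j, hjr⟩).symm
      rw [eq_at_zero_of_agree hc hagree, eq_at_zero_of_agree hd hagree]
      exact hne

/-- The complementary part of the index interval. -/
noncomputable def K (r r' : ℕ) : Finset ℤ :=
  Finset.Icc (-(r' : ℤ)) (r' : ℤ) \ Finset.Icc (-(r : ℤ)) (r : ℤ)

noncomputable def wordEquiv {r r' : ℕ} (h : r ≤ r') :
    Word A r' ≃ Word A r × (↥(K r r') → A) where
  toFun u := (res h u, fun k => u ⟨k.1, (Finset.mem_sdiff.mp k.2).1⟩)
  invFun p := fun j =>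
    if hj : j.1 ∈ Finset.Icc (-(r : ℤ)) (r : ℤ) then p.1 ⟨j.1, hj⟩
    else p.2 ⟨j.1, Finset.mem_sdiff.mpr ⟨j.2, hj⟩⟩
  left_inv u := by
    funext j
    by_cases hj : j.1 ∈ Finset.Icc (-(r : ℤ)) (r : ℤ)
    · exact dif_pos hj
    · exact dif_neg hj
  right_inv p := by
    obtain ⟨w, g⟩ := p
    refine Prod.ext ?_ ?_
    · funext j
      exact dif_pos j.2
    · funext k
      exact dif_neg (Finset.mem_sdiff.mp k.2).2

lemma ncard_res_preimage [Fintype A] {r r' : ℕ} (h : r ≤ r') (S : Set (Word A r)) :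
    (res (A := A) h ⁻¹' S).ncard
      = S.ncard * Fintype.card (↥(K r r') → A) := by
  have himg : (wordEquiv (A := A) h) '' (res h ⁻¹' S)
      = S ×ˢ (Set.univ : Set (↥(K r r') → A)) := by
    ext p
    constructor
    · rintro ⟨u, hu, rfl⟩
      exact ⟨hu, trivial⟩
    · rintro ⟨hp, -⟩
      refine ⟨(wordEquiv h).symm p, ?_, (wordEquiv h).apply_symm_apply p⟩
      show res h ((wordEquiv h).symm p) ∈ S
      have : res h ((wordEquiv h).symm p) = ((wordEquiv h) ((wordEquiv h).symm p)).1 := rfl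
      rw [this, (wordEquiv h).apply_symm_apply]
      exact hp
  have hcard := Set.ncard_image_of_injective (res (A := A) h ⁻¹' S) (wordEquiv h).injective
  rw [himg] at hcard
  rw [← hcard, ← Nat.card_coe_set_eq, Nat.card_congr (Equiv.Set.prod S Set.univ),
    Nat.card_prod, Nat.card_coe_set_eq, Nat.card_coe_set_eq, Set.ncard_univ,
    Nat.card_eq_fintype_card]

lemma deltaR_change [Fintype A] {c d : (ℤ → A) → (ℤ → A)} {r r' : ℕ} (h : r ≤ r')
    (hA0 : Nonempty A) (hc : HasRadius r c) (hd : HasRadius r d) :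
    deltaR r' c d = deltaR r c d := by
  classical
  set m : ℕ := Fintype.card (↥(K r r') → A) with hm
  have hmpos : 0 < m := by
    have : Nonempty (↥(K r r') → A) := ⟨fun _ => Classical.arbitrary A⟩
    exact Fintype.card_pos
  have hnum : (diffSet r' c d).ncard = (diffSet r c d).ncard * m := by
    rw [diffSet_eq_preimage h hc hd, ncard_res_preimage h]
  have hcongr := Fintype.card_congr (wordEquiv (A := A) h)
  rw [Fintype.card_prod, card_word, card_word] at hcongr
  have hdenR : ((Fintype.card A : ℝ)) ^ (2 * r' + 1)
      = (Fintype.card A : ℝ) ^ (2 * r + 1) * m := by exact_mod_cast hcongr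
  unfold deltaR
  rw [hnum, hdenR]
  push_cast
  rw [mul_div_mul_right _ _ (by exact_mod_cast hmpos.ne' : (m : ℝ) ≠ 0)]

lemma diffSet_comm {r : ℕ} (c d : (ℤ → A) → (ℤ → A)) :
    diffSet r c d = diffSet r d c := by
  ext w
  constructor <;> rintro ⟨x, hx, hne⟩ <;> exact ⟨x, hx, hne.symm⟩

end AuxProof

/-- `δ` is a metric on the set of cellular automata: its value does not
depend on the choice of common radius, it vanishes exactly on the diagonal, is
nonnegative, symmetric, and satisfies the triangle inequality. -/
theorem stmt0 {A : Type} [Fintype A] (hA : 2 ≤ Fintype.card A) :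
    (∀ (c d : (ℤ → A) → (ℤ → A)) (r r' : ℕ), HasRadius r c → HasRadius r d →
      HasRadius r' c → HasRadius r' d → deltaR r c d = deltaR r' c d) ∧
    (∀ (c d : (ℤ → A) → (ℤ → A)) (r : ℕ), HasRadius r c → HasRadius r d →
      (deltaR r c d = 0 ↔ c = d)) ∧
    (∀ (c d : (ℤ → A) → (ℤ → A)) (r : ℕ), 0 ≤ deltaR r c d) ∧
    (∀ (c d : (ℤ → A) → (ℤ → A)) (r : ℕ), deltaR r c d = deltaR r d c) ∧
    (∀ (c d e : (ℤ → A) → (ℤ → A)) (r : ℕ), HasRadius r c → HasRadius r d →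
      HasRadius r e → deltaR r c e ≤ deltaR r c d + deltaR r d e) := by
  have hA0 : Nonempty A := Fintype.card_pos_iff.mp (by omega)
  have hApos : ∀ n : ℕ, (0 : ℝ) < (Fintype.card A : ℝ) ^ n := fun n => by
    have : (0 : ℝ) < (Fintype.card A : ℝ) := by exact_mod_cast (by omega : 0 < Fintype.card A)
    positivity
  refine ⟨?_, ?_, ?_, ?_, ?_⟩
  · intro c d r r' hrc hrd hrc' hrd'
    rw [← deltaR_change (le_max_left r r') hA0 hrc hrd,
      ← deltaR_change (le_max_right r r') hA0 hrc' hrd']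
  · intro c d r hc hd
    constructor
    · intro h0
      have hzero : (diffSet r c d).ncard = 0 := by
        rcases div_eq_zero_iff.mp h0 with h | h
        · exact_mod_cast h
        · exact absurd h (hApos _).ne'
      have hempty : diffSet r c d = ∅ := (Set.ncard_eq_zero (Set.toFinite _)).mp hzero
      have hzero0 : ∀ x : ℤ → A, c x 0 = d x 0 := by
        intro x
        by_contra hne
        have : (fun j : (Finset.Icc (-(r : ℤ)) (r : ℤ) : Finset ℤ) => x j.1)
            ∈ diffSet r c d := ⟨x, fun j => rfl, hne⟩
        rw [hempty] at this
        exact this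
      obtain ⟨F, hF, hFl⟩ := hc
      obtain ⟨G, hG, hGl⟩ := hd
      funext x i
      have h1 : c x i = c (fun j => x (i + j)) 0 := by
        rw [hFl, hFl]
        congr 1
        funext j
        rw [zero_add]
      have h2 : d x i = d (fun j => x (i + j)) 0 := by
        rw [hGl, hGl]
        congr 1
        funext j
        rw [zero_add]
      rw [h1, h2, hzero0]
    · rintro rfl
      have hempty : diffSet r c c = ∅ := by
        ext w
        simp only [Set.mem_empty_iff_false, iff_false]
        rintro ⟨x, hx, hne⟩
        exact hne rfl
      unfold deltaR
      rw [hempty, Set.ncard_empty]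
      simp
  · intro c d r
    unfold deltaR
    positivity
  · intro c d r
    unfold deltaR
    rw [diffSet_comm]
  · intro c d e r _ _ _
    have hsub : diffSet r c e ⊆ diffSet r c d ∪ diffSet r d e := by
      rintro w ⟨x, hx, hne⟩
      by_cases h : c x 0 = d x 0
      · exact Or.inr ⟨x, hx, fun hde => hne (h.trans hde)⟩
      · exact Or.inl ⟨x, hx, h⟩
    have h1 : (diffSet r c e).ncard
        ≤ (diffSet r c d).ncard + (diffSet r d e).ncard :=
      le_trans (Set.ncard_le_ncard hsub (Set.toFinite _)) (Set.ncard_union_le _ _)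
    unfold deltaR
    rw [← add_div]
    gcongr
    exact_mod_cast h1
end

section
/- Let Σ be a finite alphabet with |Σ| ≥ 2 and let r ∈ ℕ. For any cellular automaton c of radius at most r on Σ^ℤ, the distance δ(σ^{r+1}, c) = 1 - 1/|Σ|, where σ is the shift map. Consequently, the metric space (CA, δ) is not totally bounded. -/
open MeasureTheory Filter Function

section MainAux

open Function

variable {A : Type}

lemma hasRadius_mono {r s : ℕ} (h : r ≤ s) {f : (ℤ → A) → (ℤ → A)}
    (hf : HasRadius r f) : HasRadius s f := by
  obtain ⟨F, hF, hloc⟩ := hf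
  exact ⟨F, fun x y hxy => hF x y (fun j hj => hxy j (hj.trans (by exact_mod_cast h))), hloc⟩

lemma hasRadius_shiftPow (r : ℕ) :
    HasRadius (r + 1) (fun (x : ℤ → A) i => x (i + (r : ℤ) + 1)) := by
  refine ⟨fun x => x ((r : ℤ) + 1), fun x y h => h _ ?_, fun x i => ?_⟩
  · rw [abs_of_nonneg (by positivity : (0:ℤ) ≤ (r : ℤ) + 1)]
    push_cast
    omega
  · show x (i + (r : ℤ) + 1) = x (i + ((r : ℤ) + 1))
    ring_nf

lemma rad_le_of_hasRadius {r : ℕ} {f : (ℤ → A) → (ℤ → A)} (h : HasRadius r f) :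
    rad f ≤ r := Nat.sInf_le h

lemma rad_shiftPow [Fintype A] (hA : 2 ≤ Fintype.card A) (r : ℕ) :
    rad (fun (x : ℤ → A) i => x (i + (r : ℤ) + 1)) = r + 1 := by
  refine le_antisymm (rad_le_of_hasRadius (hasRadius_shiftPow r)) ?_
  refine le_csInf ⟨r + 1, hasRadius_shiftPow r⟩ ?_
  rintro s ⟨F, hF, hloc⟩
  by_contra hs
  push_neg at hs
  obtain ⟨a, b, hab⟩ := Fintype.exists_pair_of_one_lt_card (α := A) (by omega)
  classical
  set x : ℤ → A := fun _ => a with hx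
  set y : ℤ → A := Function.update x ((r : ℤ) + 1) b with hy
  have hxy : F x = F y := by
    refine hF x y fun j hj => ?_
    have hj' : j ≠ (r : ℤ) + 1 := by
      intro hj'
      rw [hj', abs_of_nonneg (by positivity : (0:ℤ) ≤ (r:ℤ)+1)] at hj
      omega
    rw [hy, Function.update_of_ne hj']
  have h1 : (fun (x : ℤ → A) i => x (i + (r : ℤ) + 1)) x 0 = F x := by
    rw [hloc x 0]
  have h2 : (fun (x : ℤ → A) i => x (i + (r : ℤ) + 1)) y 0 = F y := by
    rw [hloc y 0]; congr 1; funext j; rw [zero_add]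
  simp only at h1 h2
  have ha : x (0 + (r : ℤ) + 1) = a := rfl
  have hb : y (0 + (r : ℤ) + 1) = b := by
    have h0 : (0 : ℤ) + (r : ℤ) + 1 = (r : ℤ) + 1 := by ring
    rw [h0, hy, Function.update_self]
  exact hab (by rw [← ha, h1, hxy, ← h2, hb])

lemma card_ne_subtype {I : Type} [Fintype I] [DecidableEq I] [Fintype A]
    [DecidableEq A] [Nonempty A] (i₀ : I) (g : (I → A) → A)
    (hg : ∀ w a, g (Function.update w i₀ a) = g w) :
    Nat.card {w : I → A // w i₀ ≠ g w} =
      (Fintype.card A - 1) * Fintype.card A ^ (Fintype.card I - 1) := by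
  classical
  set a₀ := Classical.arbitrary A with ha₀
  set φ : (I → A) → (I → A) := fun w => Function.update w i₀ (Equiv.swap (g w) a₀ (w i₀)) with hφ
  have hφi : ∀ w, φ w i₀ = Equiv.swap (g w) a₀ (w i₀) := fun w => Function.update_self _ _ _
  have hgφ : ∀ w, g (φ w) = g w := fun w => hg _ _
  have hφφ : ∀ w, φ (φ w) = w := by
    intro w
    show Function.update (φ w) i₀ (Equiv.swap (g (φ w)) a₀ ((φ w) i₀)) = w
    rw [hgφ, hφi, Equiv.swap_apply_self]
    simp only [hφ]
    rw [Function.update_idem, Function.update_eq_self]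
  have e1 : {w : I → A // w i₀ ≠ g w} ≃ {w : I → A // w i₀ ≠ a₀} := by
    refine ⟨fun w => ⟨φ w.1, ?_⟩, fun w => ⟨φ w.1, ?_⟩, fun w => ?_, fun w => ?_⟩
    · rw [hφi]
      intro h
      exact w.2 ((Equiv.swap (g w.1) a₀).injective
        (h.trans (Equiv.swap_apply_left _ _).symm))
    · rw [hφi, hgφ]
      intro h
      exact w.2 ((Equiv.swap (g w.1) a₀).injective
        (h.trans (Equiv.swap_apply_right _ _).symm))
    · exact Subtype.ext (hφφ w.1)
    · exact Subtype.ext (hφφ w.1)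
  have e2 : {w : I → A // w i₀ ≠ a₀} ≃ {a : A // a ≠ a₀} × ({j : I // j ≠ i₀} → A) := by
    refine ⟨fun w => (⟨w.1 i₀, w.2⟩, fun j => w.1 j.1),
      fun p => ⟨fun j => if h : j = i₀ then p.1.1 else p.2 ⟨j, h⟩, by simp [p.1.2]⟩,
      fun w => ?_, fun p => ?_⟩
    · refine Subtype.ext (funext fun j => ?_)
      by_cases h : j = i₀ <;> simp [h]
    · refine Prod.ext (Subtype.ext ?_) (funext fun j => ?_)
      · simp
      · simp [j.2]
  rw [Nat.card_congr (e1.trans e2), Nat.card_prod, Nat.card_eq_fintype_card,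
    Nat.card_eq_fintype_card, Fintype.card_fun]
  congr 1
  · simp [Fintype.card_subtype_compl]
  · congr 1
    simp [Fintype.card_subtype_compl]

lemma deltaR_shift [Fintype A] (hA : 2 ≤ Fintype.card A) (r : ℕ) (c : (ℤ → A) → (ℤ → A))
    (hc : HasRadius r c) :
    deltaR (r + 1) (fun (x : ℤ → A) i => x (i + (r : ℤ) + 1)) c
      = 1 - 1 / (Fintype.card A : ℝ) := by
  classical
  have hNe : Nonempty A := Fintype.card_pos_iff.mp (by omega)
  obtain ⟨F, hF, hloc⟩ := hc
  set n : ℕ := r + 1 with hn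
  set ext : Word A n → (ℤ → A) := fun w j =>
    if h : j ∈ Finset.Icc (-(n : ℤ)) (n : ℤ) then w ⟨j, h⟩ else Classical.arbitrary A
    with hext
  have hextw : ∀ (w : Word A n) (j : (Finset.Icc (-(n : ℤ)) (n : ℤ) : Finset ℤ)),
      ext w j.1 = w j := by
    intro w j
    simp only [hext]
    rw [dif_pos j.2]
  have hmem : ∀ j : ℤ, |j| ≤ (r : ℤ) → j ∈ Finset.Icc (-(n : ℤ)) (n : ℤ) := by
    intro j hj
    have := abs_le.mp hj
    rw [Finset.mem_Icc, hn]
    push_cast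
    omega
  have hc0 : ∀ (x : ℤ → A) (w : Word A n),
      (∀ j : (Finset.Icc (-(n : ℤ)) (n : ℤ) : Finset ℤ), x j.1 = w j) →
      c x 0 = c (ext w) 0 := by
    intro x w h
    rw [hloc, hloc]
    refine hF _ _ fun j hj => ?_
    show x (0 + j) = ext w (0 + j)
    rw [zero_add]
    rw [h ⟨j, hmem j hj⟩]
    exact (hextw w ⟨j, hmem j hj⟩).symm
  have hi₀mem : ((r : ℤ) + 1) ∈ Finset.Icc (-(n : ℤ)) (n : ℤ) := by
    rw [Finset.mem_Icc, hn]; push_cast; omega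
  set i₀ : (Finset.Icc (-(n : ℤ)) (n : ℤ) : Finset ℤ) := ⟨(r : ℤ) + 1, hi₀mem⟩ with hi₀
  set g : Word A n → A := fun w => c (ext w) 0 with hg
  have hset : diffSet n (fun (x : ℤ → A) i => x (i + (r : ℤ) + 1)) c
      = {w : Word A n | w i₀ ≠ g w} := by
    ext w
    constructor
    · rintro ⟨x, hx, hne⟩
      have h1 : x (0 + (r : ℤ) + 1) = w i₀ := by
        have h0 : (0 : ℤ) + (r : ℤ) + 1 = (r : ℤ) + 1 := by ring
        rw [h0]
        exact hx i₀
      intro h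
      apply hne
      show x (0 + (r : ℤ) + 1) = c x 0
      rw [h1, hc0 x w hx, h]
    · intro h
      refine ⟨ext w, fun j => hextw w j, ?_⟩
      show ext w (0 + (r : ℤ) + 1) ≠ c (ext w) 0
      have h0 : (0 : ℤ) + (r : ℤ) + 1 = (r : ℤ) + 1 := by ring
      rw [h0]
      have : ext w ((r : ℤ) + 1) = w i₀ := hextw w i₀
      rw [this]
      exact h
  have hginv : ∀ (w : Word A n) (a : A), g (Function.update w i₀ a) = g w := by
    intro w a
    rw [hg]
    simp only
    rw [hloc, hloc]
    refine hF _ _ fun j hj => ?_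
    show ext (Function.update w i₀ a) (0 + j) = ext w (0 + j)
    rw [zero_add]
    have hjmem := hmem j hj
    have hjne : (⟨j, hjmem⟩ : (Finset.Icc (-(n : ℤ)) (n : ℤ) : Finset ℤ)) ≠ i₀ := by
      intro hj'
      have : j = (r : ℤ) + 1 := congrArg Subtype.val hj'
      rw [this, abs_of_nonneg (by positivity : (0:ℤ) ≤ (r:ℤ)+1)] at hj
      omega
    rw [hextw (Function.update w i₀ a) ⟨j, hjmem⟩, hextw w ⟨j, hjmem⟩]
    exact Function.update_of_ne hjne _ _
  have hIcard : Fintype.card ((Finset.Icc (-(n : ℤ)) (n : ℤ) : Finset ℤ)) = 2 * n + 1 := by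
    rw [Fintype.card_coe, Int.card_Icc]
    omega
  have hcard : (diffSet n (fun (x : ℤ → A) i => x (i + (r : ℤ) + 1)) c).ncard
      = (Fintype.card A - 1) * Fintype.card A ^ (2 * n) := by
    rw [hset, ← Nat.card_coe_set_eq]
    have hcnt := card_ne_subtype (I := (Finset.Icc (-(n : ℤ)) (n : ℤ) : Finset ℤ))
      i₀ g hginv
    rw [hIcard] at hcnt
    have h2n : 2 * n + 1 - 1 = 2 * n := Nat.add_sub_cancel _ _
    rw [h2n] at hcnt
    exact hcnt
  show (diffSet n (fun (x : ℤ → A) i => x (i + (r : ℤ) + 1)) c).ncard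
      / (Fintype.card A : ℝ) ^ (2 * n + 1) = 1 - 1 / (Fintype.card A : ℝ)
  rw [hcard]
  have hq0 : (Fintype.card A : ℝ) ≠ 0 :=
    Nat.cast_ne_zero.mpr (Nat.pos_iff_ne_zero.mp (lt_of_lt_of_le two_pos hA))
  push_cast [Nat.cast_sub (le_trans one_le_two hA)]
  field_simp
  ring

lemma delta_shift {A : Type} [Fintype A] (hA : 2 ≤ Fintype.card A) (r : ℕ)
    (c : (ℤ → A) → (ℤ → A)) (hc : HasRadius r c) :
    delta (fun (x : ℤ → A) i => x (i + (r : ℤ) + 1)) c = 1 - 1 / (Fintype.card A : ℝ) := by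
  have h1 := rad_shiftPow hA r
  have h2 : rad c ≤ r := rad_le_of_hasRadius hc
  show deltaR (max (rad (fun (x : ℤ → A) i => x (i + (r : ℤ) + 1))) (rad c)) _ c
      = 1 - 1 / (Fintype.card A : ℝ)
  rw [h1, max_eq_left (h2.trans (Nat.le_succ r))]
  exact deltaR_shift hA r c hc

end MainAux

/-- `δ(σ^{r+1}, c) = 1 - 1/|Σ|` for every CA `c` of radius at most `r`,
and consequently the space of cellular automata is not totally bounded. -/
theorem stmt1 {A : Type} [Fintype A] (hA : 2 ≤ Fintype.card A) :
    (∀ (r : ℕ) (c : (ℤ → A) → (ℤ → A)), HasRadius r c →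
      delta (fun x i => x (i + (r : ℤ) + 1)) c = 1 - 1 / (Fintype.card A : ℝ)) ∧
    (∃ ε : ℝ, 0 < ε ∧ ∀ F : Finset ((ℤ → A) → (ℤ → A)), (∀ f ∈ F, IsCA f) →
      ∃ c, IsCA c ∧ ∀ d ∈ F, ε ≤ delta c d) := by
  constructor
  · intro r c hc
    exact delta_shift hA r c hc
  · refine ⟨1/2, by norm_num, fun F hF => ?_⟩
    classical
    set r := F.sup rad with hr
    refine ⟨fun x i => x (i + (r : ℤ) + 1), ⟨r + 1, hasRadius_shiftPow r⟩, fun d hd => ?_⟩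
    have hrad : HasRadius (rad d) d := Nat.sInf_mem (hF d hd)
    have hrd : HasRadius r d := hasRadius_mono (Finset.le_sup hd) hrad
    rw [delta_shift hA r d hrd]
    have hhalf : (1 : ℝ) / (Fintype.card A) ≤ 1 / 2 :=
      one_div_le_one_div_of_le (by norm_num) (by exact_mod_cast hA)
    linarith
end

section
/- Composition restricted to CA × SUR is continuous in the uniform Bernoulli metric: if cᵢ → c and dᵢ → d with all dᵢ surjective, then cᵢ ∘ dᵢ → c ∘ d. Quantitatively, if δ(cᵢ,c) < ε and δ(dᵢ,d) < ε with r(cᵢ) ≥ r(c) and r(dᵢ) ≥ r(d), then δ(cᵢ ∘ dᵢ, c ∘ d) < (2·r(c)+2)·ε. -/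
open MeasureTheory Filter Function

open Finset

namespace CAx

set_option linter.unusedSectionVars false

variable {A : Type} [Fintype A] [Nonempty A]

open scoped Classical

/-- word image map of a local rule `G` of (one-sided window) size `2s+1` -/
noncomputable def wmap (s : ℕ) (G : (Fin (2*s+1) → A) → A) (n : ℕ)
    (x : Fin (n+2*s) → A) : Fin n → A :=
  fun i => G (fun j => x ⟨i.1 + j.1, by omega⟩)

noncomputable def pre (s : ℕ) (G : (Fin (2*s+1) → A) → A) (n : ℕ) (v : Fin n → A) :
    Finset (Fin (n+2*s) → A) :=
  univ.filter (fun x => wmap s G n x = v)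

noncomputable def pc (s : ℕ) (G : (Fin (2*s+1) → A) → A) (n : ℕ) (v : Fin n → A) : ℕ :=
  (pre s G n v).card

variable {s : ℕ} {G : (Fin (2*s+1) → A) → A}

lemma sum_pc (n : ℕ) : ∑ v : Fin n → A, pc s G n v = Fintype.card A ^ (n + 2*s) := by
  classical
  have h := Finset.card_eq_sum_card_fiberwise
    (f := wmap s G n) (s := (univ : Finset (Fin (n+2*s) → A))) (t := univ)
    (fun x _ => mem_univ _)
  rw [card_univ, Fintype.card_fun, Fintype.card_fin] at h
  rw [h]; rfl

lemma wmap_castSucc (N : ℕ) (x : Fin (N+1+2*s) → A) (i : Fin N) :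
    wmap s G (N+1) x i.castSucc = wmap s G N (fun k : Fin (N+2*s) => x ⟨k.1, by omega⟩) i := by
  unfold wmap
  exact congrArg G (funext fun j => congrArg x (Fin.ext (by simp)))

/-- snoc identity -/
lemma sum_pc_snoc (N : ℕ) (Y : Fin N → A) :
    ∑ b : A, pc s G (N+1) (Fin.snoc Y b) = Fintype.card A * pc s G N Y := by
  classical
  set S : Finset (Fin (N+1+2*s) → A) :=
    univ.filter (fun x => ∀ i : Fin N, wmap s G (N+1) x i.castSucc = Y i) with hS
  have h1 : S.card = ∑ b : A, pc s G (N+1) (Fin.snoc Y b) := by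
    have h := Finset.card_eq_sum_card_fiberwise
      (f := fun x => wmap s G (N+1) x (Fin.last N)) (s := S) (t := univ)
      (fun x _ => mem_univ _)
    rw [h]
    refine Finset.sum_congr rfl (fun b _ => ?_)
    congr 1
    ext x
    simp only [hS, mem_filter, mem_univ, true_and, pre]
    constructor
    · rintro ⟨h1, h2⟩
      funext i
      refine Fin.lastCases ?_ (fun i => ?_) i
      · rw [h2, Fin.snoc_last]
      · rw [h1, Fin.snoc_castSucc]
    · intro h
      constructor
      · intro i; rw [h, Fin.snoc_castSucc]
      · rw [h, Fin.snoc_last]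
  have h2 : S.card = Fintype.card A * pc s G N Y := by
    have hb : S.card = ((pre s G N Y) ×ˢ (univ : Finset A)).card := by
      refine Finset.card_bij'
        (fun x _ => ((fun k : Fin (N+2*s) => x ⟨k.1, by omega⟩), x ⟨N+2*s, by omega⟩))
        (fun yz _ => (fun k : Fin (N+1+2*s) =>
          if h : k.1 < N+2*s then yz.1 ⟨k.1, h⟩ else yz.2))
        (fun x hx => ?_) (fun yz hyz => ?_) (fun x hx => ?_) (fun yz hyz => ?_)
      · simp only [hS, mem_filter, mem_univ, true_and] at hx
        simp only [Finset.mem_product, mem_univ, and_true, pre, mem_filter, true_and]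
        funext i
        rw [← wmap_castSucc, hx]
      · simp only [hS, mem_filter, mem_univ, true_and]
        intro i
        simp only [Finset.mem_product, pre, mem_filter, mem_univ, true_and, and_true] at hyz
        rw [wmap_castSucc]
        have : (fun k : Fin (N+2*s) =>
            (fun k' : Fin (N+1+2*s) => if h : k'.1 < N+2*s then yz.1 ⟨k'.1, h⟩ else yz.2) ⟨k.1, by omega⟩)
            = yz.1 := by
          funext k; exact dif_pos k.isLt
        rw [this, hyz]
      · funext k
        by_cases h : k.1 < N + 2*s
        · simp only [dif_pos h]
        · simp only [dif_neg h]
          have hk := k.isLt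
          exact congrArg x (Fin.ext (by simp only [Fin.val_mk]; omega))
      · refine Prod.ext ?_ ?_
        · funext k; exact dif_pos k.isLt
        · simp only [dif_neg (lt_irrefl (N+2*s))]
    rw [hb, Finset.card_product, card_univ, mul_comm]; rfl
  rw [← h1, h2]

lemma wmap_succ_tail (N : ℕ) (x : Fin (N+1+2*s) → A) (i : Fin N) :
    wmap s G (N+1) x i.succ = wmap s G N (fun k : Fin (N+2*s) => x ⟨k.1 + 1, by omega⟩) i := by
  unfold wmap
  refine congrArg G (funext fun j => congrArg x (Fin.ext ?_))
  simp [Fin.val_succ]; omega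

/-- cons identity -/
lemma sum_pc_cons (N : ℕ) (Y : Fin N → A) :
    ∑ b : A, pc s G (N+1) (Fin.cons b Y) = Fintype.card A * pc s G N Y := by
  classical
  set S : Finset (Fin (N+1+2*s) → A) :=
    univ.filter (fun x => ∀ i : Fin N, wmap s G (N+1) x i.succ = Y i) with hS
  have h1 : S.card = ∑ b : A, pc s G (N+1) (Fin.cons b Y) := by
    have h := Finset.card_eq_sum_card_fiberwise
      (f := fun x => wmap s G (N+1) x 0) (s := S) (t := univ)
      (fun x _ => mem_univ _)
    rw [h]
    refine Finset.sum_congr rfl (fun b _ => ?_)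
    congr 1
    ext x
    simp only [hS, mem_filter, mem_univ, true_and, pre]
    constructor
    · rintro ⟨h1, h2⟩
      funext i
      refine Fin.cases ?_ (fun i => ?_) i
      · rw [h2, Fin.cons_zero]
      · rw [h1, Fin.cons_succ]
    · intro h
      constructor
      · intro i; rw [h, Fin.cons_succ]
      · rw [h, Fin.cons_zero]
  have h2 : S.card = Fintype.card A * pc s G N Y := by
    have hb : S.card = ((univ : Finset A) ×ˢ (pre s G N Y)).card := by
      refine Finset.card_bij'
        (fun x _ => (x ⟨0, by omega⟩, (fun k : Fin (N+2*s) => x ⟨k.1 + 1, by omega⟩)))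
        (fun yz _ => (fun k : Fin (N+1+2*s) =>
          if h : k.1 = 0 then yz.1 else yz.2 ⟨k.1 - 1, by omega⟩))
        (fun x hx => ?_) (fun yz hyz => ?_) (fun x hx => ?_) (fun yz hyz => ?_)
      · simp only [hS, mem_filter, mem_univ, true_and] at hx
        simp only [Finset.mem_product, mem_univ, true_and, pre, mem_filter]
        funext i
        rw [← wmap_succ_tail, hx]
      · simp only [hS, mem_filter, mem_univ, true_and]
        intro i
        simp only [Finset.mem_product, pre, mem_filter, mem_univ, true_and] at hyz
        rw [wmap_succ_tail]
        have : (fun k : Fin (N+2*s) =>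
            (fun k' : Fin (N+1+2*s) => if h : k'.1 = 0 then yz.1 else yz.2 ⟨k'.1 - 1, by omega⟩)
              ⟨k.1 + 1, by omega⟩) = yz.2 := by
          funext k
          simp only [dif_neg (Nat.succ_ne_zero k.1)]
          exact congrArg yz.2 (Fin.ext (by simp only [Fin.val_mk]; omega))
        rw [this, hyz]
      · funext k
        by_cases h : k.1 = 0
        · simp only [dif_pos h]
          exact congrArg x (Fin.ext (by simp only [Fin.val_mk]; omega))
        · simp only [dif_neg h]
          have hk := k.isLt
          exact congrArg x (Fin.ext (by simp only [Fin.val_mk]; omega))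
      · refine Prod.ext ?_ ?_
        · simp
        · funext k
          simp only [dif_neg (Nat.succ_ne_zero k.1)]
          exact congrArg yz.2 (Fin.ext (by simp only [Fin.val_mk]; omega))
    rw [hb, Finset.card_product, card_univ]; rfl
  rw [← h1, h2]

/-- concatenation -/
noncomputable def cat {K n : ℕ} (u : Fin K → A) (v : Fin n → A) : Fin (K+n) → A :=
  fun i => if h : i.1 < K then u ⟨i.1, h⟩ else v ⟨i.1 - K, by have := i.isLt; omega⟩

/-- prepend identity -/
lemma sum_pc_cat (K n : ℕ) (v : Fin n → A) :
    ∑ u : Fin K → A, pc s G (K+n) (cat u v) = Fintype.card A ^ K * pc s G n v := by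
  classical
  set S : Finset (Fin (K+n+2*s) → A) :=
    univ.filter (fun x => ∀ i : Fin n, wmap s G (K+n) x ⟨K+i.1, by have := i.isLt; omega⟩ = v i)
    with hS
  have h1 : S.card = ∑ u : Fin K → A, pc s G (K+n) (cat u v) := by
    have h := Finset.card_eq_sum_card_fiberwise
      (f := fun x => (fun i : Fin K => wmap s G (K+n) x ⟨i.1, by have := i.isLt; omega⟩))
      (s := S) (t := univ) (fun x _ => mem_univ _)
    rw [h]
    refine Finset.sum_congr rfl (fun u _ => ?_)
    congr 1
    ext x
    simp only [hS, mem_filter, mem_univ, true_and, pre]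
    constructor
    · rintro ⟨h1, h2⟩
      funext i
      by_cases hi : i.1 < K
      · have h3 := congrFun h2 ⟨i.1, hi⟩
        simp only at h3
        rw [show (cat u v) i = u ⟨i.1, hi⟩ from dif_pos hi, ← h3]
      · have h3 := h1 ⟨i.1 - K, by have := i.isLt; omega⟩
        rw [show (cat u v) i = v ⟨i.1 - K, by have := i.isLt; omega⟩ from dif_neg hi, ← h3]
        exact congrArg (wmap s G (K+n) x) (Fin.ext (by simp only [Fin.val_mk]; omega))
    · intro h
      constructor
      · intro i
        rw [h]
        have hni : ¬ ((K + i.1 : ℕ) < K) := by omega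
        rw [show (cat u v) ⟨K+i.1, by have := i.isLt; omega⟩
             = v ⟨K + i.1 - K, by have := i.isLt; omega⟩ from dif_neg hni]
        exact congrArg v (Fin.ext (by simp only [Fin.val_mk]; omega))
      · funext i
        rw [h]
        exact (dif_pos i.isLt).trans (congrArg u (Fin.ext rfl))
  have h2 : S.card = Fintype.card A ^ K * pc s G n v := by
    have hb : S.card = ((univ : Finset (Fin K → A)) ×ˢ pre s G n v).card := by
      refine Finset.card_bij'
        (fun x _ => ((fun k : Fin K => x ⟨k.1, by have := k.isLt; omega⟩),
                     (fun k : Fin (n+2*s) => x ⟨K + k.1, by have := k.isLt; omega⟩)))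
        (fun yz _ => (fun k : Fin (K+n+2*s) =>
          if h : k.1 < K then yz.1 ⟨k.1, h⟩ else yz.2 ⟨k.1 - K, by have := k.isLt; omega⟩))
        (fun x hx => ?_) (fun yz hyz => ?_) (fun x hx => ?_) (fun yz hyz => ?_)
      · simp only [hS, mem_filter, mem_univ, true_and] at hx
        simp only [Finset.mem_product, mem_univ, true_and, pre, mem_filter]
        funext i
        rw [← hx i]
        exact congrArg G (funext fun j =>
          congrArg x (Fin.ext (by simp only [Fin.val_mk]; omega)))
      · simp only [hS, mem_filter, mem_univ, true_and]
        intro i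
        simp only [Finset.mem_product, pre, mem_filter, mem_univ, true_and] at hyz
        show G _ = v i
        have key : (fun j : Fin (2*s+1) =>
            (fun k : Fin (K+n+2*s) => if h : k.1 < K then yz.1 ⟨k.1, h⟩
              else yz.2 ⟨k.1 - K, by have := k.isLt; omega⟩)
              ⟨K + i.1 + j.1, by have := i.isLt; have := j.isLt; omega⟩)
            = (fun j : Fin (2*s+1) => yz.2 ⟨i.1 + j.1, by have := i.isLt; have := j.isLt; omega⟩) := by
          funext j
          have hnk : ¬ ((K + i.1 + j.1 : ℕ) < K) := by omega
          simp only [dif_neg hnk]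
          exact congrArg yz.2 (Fin.ext (by simp only [Fin.val_mk]; omega))
        rw [show (G _ = v i) = (G (fun j : Fin (2*s+1) =>
              yz.2 ⟨i.1 + j.1, by have := i.isLt; have := j.isLt; omega⟩) = v i) from
            congrArg (· = v i) (congrArg G key)]
        exact congrFun hyz i
      · funext k
        by_cases h : k.1 < K
        · simp only [dif_pos h]
        · simp only [dif_neg h]
          exact congrArg x (Fin.ext (by simp only [Fin.val_mk]; omega))
      · refine Prod.ext ?_ ?_
        · funext k
          simp only [dif_pos k.isLt]
        · funext k
          have hnk : ¬ ((K + k.1 : ℕ) < K) := by omega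
          simp only [dif_neg hnk]
          exact congrArg yz.2 (Fin.ext (by simp only [Fin.val_mk]; omega))
    rw [hb, Finset.card_product, card_univ, Fintype.card_fun, Fintype.card_fin]; rfl
  rw [← h1, h2]

/-- split bound -/
lemma pc_cat_le (K n : ℕ) (u : Fin K → A) (v : Fin n → A) :
    pc s G (K+n) (cat u v) ≤ pc s G K u * pc s G n v := by
  classical
  rw [show pc s G K u * pc s G n v = ((pre s G K u) ×ˢ (pre s G n v)).card from
    (Finset.card_product _ _).symm]
  refine Finset.card_le_card_of_injOn
    (fun x => ((fun k : Fin (K+2*s) => x ⟨k.1, by have := k.isLt; omega⟩),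
               (fun k : Fin (n+2*s) => x ⟨K + k.1, by have := k.isLt; omega⟩)))
    (fun x hx => ?_) (fun x hx x' hx' heq => ?_)
  · simp only [Finset.mem_coe, pre, mem_filter, mem_univ, true_and] at hx
    simp only [Finset.mem_coe, Finset.mem_product, pre, mem_filter, mem_univ, true_and]
    constructor
    · funext i
      have h1 : wmap s G (K+n) x ⟨i.1, by have := i.isLt; omega⟩ = u i := by
        rw [hx]
        exact (dif_pos i.isLt).trans (congrArg u (Fin.ext rfl))
      rw [← h1]
      exact congrArg G (funext fun j => congrArg x (Fin.ext rfl))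
    · funext i
      have h1 : wmap s G (K+n) x ⟨K + i.1, by have := i.isLt; omega⟩
          = v ⟨K + i.1 - K, by have := i.isLt; omega⟩ := by
        rw [hx]
        exact dif_neg (by simp only [Fin.val_mk]; omega)
      have h2 : v (⟨K + i.1 - K, by have := i.isLt; omega⟩ : Fin n) = v i :=
        congrArg v (Fin.ext (by simp only [Fin.val_mk]; omega))
      rw [← h1.trans h2]
      exact congrArg G (funext fun j =>
        congrArg x (Fin.ext (by simp only [Fin.val_mk]; omega)))
  · funext k
    by_cases h : k.1 < K + 2*s
    · have h3 := congrFun (congrArg Prod.fst heq) ⟨k.1, h⟩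
      simp only at h3
      calc x k = x ⟨k.1, by have := k.isLt; omega⟩ := congrArg x (Fin.ext rfl)
        _ = x' ⟨k.1, by have := k.isLt; omega⟩ := h3
        _ = x' k := congrArg x' (Fin.ext rfl)
    · have h3 := congrFun (congrArg Prod.snd heq) ⟨k.1 - K, by have := k.isLt; omega⟩
      simp only at h3
      calc x k = x ⟨K + (k.1 - K), by have := k.isLt; omega⟩ :=
            congrArg x (Fin.ext (by simp only [Fin.val_mk]; omega))
        _ = x' ⟨K + (k.1 - K), by have := k.isLt; omega⟩ := h3
        _ = x' k := congrArg x' (Fin.ext (by simp only [Fin.val_mk]; omega))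

/-- minimum of pc over words of a given length -/
noncomputable def mmin (s : ℕ) (G : (Fin (2*s+1) → A) → A) (n : ℕ) : ℕ :=
  univ.inf' univ_nonempty (pc s G n)

lemma mmin_le (n : ℕ) (v : Fin n → A) : mmin s G n ≤ pc s G n v :=
  Finset.inf'_le _ (mem_univ v)

lemma exists_mmin (n : ℕ) : ∃ v : Fin n → A, pc s G n v = mmin s G n := by
  obtain ⟨v, _, hv⟩ := Finset.exists_mem_eq_inf' (univ_nonempty) (pc s G n)
  exact ⟨v, hv.symm⟩

lemma mmin_succ_le (n : ℕ) : mmin s G (n+1) ≤ mmin s G n := by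
  obtain ⟨v, hv⟩ := exists_mmin (s := s) (G := G) n
  have hsum := sum_pc_snoc (s := s) (G := G) n v
  have hq : 0 < Fintype.card A := Fintype.card_pos
  by_contra hcon
  push_neg at hcon
  have hble : ∀ b : A, pc s G n v + 1 ≤ pc s G (n+1) (Fin.snoc v b) := by
    intro b
    have h1 := mmin_le (s := s) (G := G) (n+1) (Fin.snoc v b)
    omega
  have hcontr : Fintype.card A * (pc s G n v + 1) ≤ Fintype.card A * pc s G n v := by
    calc Fintype.card A * (pc s G n v + 1)
        = ∑ _b : A, (pc s G n v + 1) := by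
          rw [Finset.sum_const, card_univ, smul_eq_mul]
      _ ≤ ∑ b : A, pc s G (n+1) (Fin.snoc v b) := Finset.sum_le_sum (fun b _ => hble b)
      _ = Fintype.card A * pc s G n v := hsum
  nlinarith

/-- pointwise equality from sum equality -/
lemma forced_eq {c : ℕ} (f : A → ℕ) (hle : ∀ b, c ≤ f b)
    (hsum : ∑ b : A, f b = Fintype.card A * c) : ∀ b, f b = c := by
  by_contra hcon
  push_neg at hcon
  obtain ⟨b0, hb0⟩ := hcon
  have hlt : c < f b0 := lt_of_le_of_ne (hle b0) (Ne.symm hb0)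
  have hs : ∑ _b : A, c < ∑ b : A, f b :=
    Finset.sum_lt_sum (fun i _ => hle i) ⟨b0, mem_univ _, hlt⟩
  rw [hsum, Finset.sum_const, card_univ, smul_eq_mul] at hs
  exact lt_irrefl _ hs

lemma exp_lemma (C D : ℕ) (hD : 2 ≤ D) : ∃ t : ℕ, C * (D-1)^t < D^t := by
  have hD0 : (0:ℝ) < (D:ℝ) := by
    have h2 : (0:ℕ) < D := by omega
    exact_mod_cast h2
  have h0 : (0:ℝ) < 1/((C:ℝ)+1) := by positivity
  have h1 : ((D:ℝ)-1)/D < 1 := by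
    rw [div_lt_one hD0]; linarith
  obtain ⟨t, ht⟩ := exists_pow_lt_of_lt_one h0 h1
  refine ⟨t, ?_⟩
  rw [div_pow] at ht
  have hC1 : (0:ℝ) < (C:ℝ)+1 := by positivity
  have hDt : (0:ℝ) < (D:ℝ)^t := by positivity
  have hkey := (div_lt_div_iff₀ hDt hC1).mp ht
  have hX : (0:ℝ) ≤ ((D:ℝ)-1)^t :=
    pow_nonneg (by
      have h2 : ((1:ℕ):ℝ) ≤ ((D:ℕ):ℝ) := Nat.cast_le.mpr (by omega)
      push_cast at h2
      linarith) t
  have hfin : (C:ℝ) * ((D:ℝ)-1)^t < (D:ℝ)^t := by nlinarith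
  have hcast : ((C * (D-1)^t : ℕ) : ℝ) < (((D:ℕ)^t : ℕ) : ℝ) := by
    push_cast [Nat.cast_sub (show 1 ≤ D by omega)]
    exact hfin
  exact_mod_cast hcast
theorem pc_balance (hq : 2 ≤ Fintype.card A)
    (hsurj : ∀ n (v : Fin n → A), 0 < pc s G n v) :
    ∀ n (v : Fin n → A), pc s G n v = Fintype.card A ^ (2*s) := by
  classical
  obtain ⟨n1, hn1⟩ : ∃ n1, mmin s G n1 = sInf (Set.range (mmin s G)) :=
    Nat.sInf_mem (Set.range_nonempty (mmin s G))
  set mstar := sInf (Set.range (mmin s G)) with hmstardef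
  have hlow : ∀ n (v : Fin n → A), mstar ≤ pc s G n v := fun n v =>
    le_trans (Nat.sInf_le ⟨n, rfl⟩) (mmin_le n v)
  obtain ⟨n0, hn0pos, hmn0⟩ : ∃ n0, 1 ≤ n0 ∧ mmin s G n0 = mstar := by
    refine ⟨n1+1, by omega, le_antisymm ?_ (Nat.sInf_le ⟨n1+1, rfl⟩)⟩
    rw [← hn1]
    exact mmin_succ_le n1
  obtain ⟨vstar, hvstar'⟩ := exists_mmin (s := s) (G := G) n0
  have hvstar : pc s G n0 vstar = mstar := hvstar'.trans hmn0
  have lemA : ∀ N (Y : Fin N → A), pc s G N Y = mstar →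
      ∀ b, pc s G (N+1) (Fin.snoc Y b) = mstar := by
    intro N Y hY
    exact forced_eq _ (fun b => hlow _ _) (by rw [sum_pc_snoc, hY])
  have lemB : ∀ N (Y : Fin N → A), pc s G N Y = mstar →
      ∀ b, pc s G (N+1) (Fin.cons b Y) = mstar := by
    intro N Y hY
    exact forced_eq _ (fun b => hlow _ _) (by rw [sum_pc_cons, hY])
  -- any word containing vstar has pc = mstar
  have claimC : ∀ N (Y : Fin N → A) (a : ℕ) (ha : a + n0 ≤ N),
      (∀ i : Fin n0, Y ⟨a + i.1, by have := i.isLt; omega⟩ = vstar i) →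
      pc s G N Y = mstar := by
    intro N
    induction N with
    | zero => intro Y a ha _; omega
    | succ N ih =>
      intro Y a ha hocc
      by_cases hle : a + n0 ≤ N
      · have hinit : pc s G N (Fin.init Y) = mstar := by
          refine ih (Fin.init Y) a hle (fun i => ?_)
          have hv : Fin.init Y (⟨a + i.1, by have := i.isLt; omega⟩ : Fin N)
              = Y ⟨a + i.1, by have := i.isLt; omega⟩ := by
            simp only [Fin.init]
            exact congrArg Y (Fin.ext (by simp))
          rw [hv]
          exact hocc i
        have hfin := lemA N (Fin.init Y) hinit (Y (Fin.last N))
        rwa [Fin.snoc_init_self] at hfin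
      · by_cases ha0 : a = 0
        · subst ha0
          have hn0N : n0 = N + 1 := by omega
          subst hn0N
          have hYv : Y = vstar := by
            funext i
            have hocci := hocc i
            rw [← hocci]
            exact congrArg Y (Fin.ext (by simp only [Fin.val_mk]; omega))
          rw [hYv, hvstar]
        · have htail : pc s G N (Fin.tail Y) = mstar := by
            refine ih (Fin.tail Y) (a-1) (by omega) (fun i => ?_)
            have hv : Fin.tail Y (⟨a - 1 + i.1, by have := i.isLt; omega⟩ : Fin N)
                = Y ⟨a + i.1, by have := i.isLt; omega⟩ := by
              simp only [Fin.tail]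
              exact congrArg Y (Fin.ext (by simp [Fin.val_succ]; omega))
            rw [hv]
            exact hocc i
          have hfin := lemB N (Fin.tail Y) htail (Y 0)
          rwa [Fin.cons_self_tail] at hfin
  set q := Fintype.card A with hqdef
  set B := n0 + 2*s with hBdef
  -- a preimage of vstar
  obtain ⟨xi, hxim⟩ := Finset.card_pos.mp (hsurj n0 vstar)
  have hxi : wmap s G n0 xi = vstar := (mem_filter.mp hxim).2
  have hB1 : 1 ≤ B := by omega
  have hDB : 2 ≤ q^B := by
    calc 2 ≤ q := hq
      _ = q^1 := (pow_one q).symm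
      _ ≤ q^B := Nat.pow_le_pow_right (by omega) hB1
  -- the main counting estimate
  have main : ∀ (n : ℕ) (v : Fin n → A) (t : ℕ),
      q^(t*B) * pc s G n v
        ≤ q^(t*B) * mstar + ((q^B - 1)^t * q^(2*s)) * pc s G n v := by
    intro n v t
    set K := t * B with hKdef
    set P : (Fin K → A) → Prop := fun u => ∃ a, ∃ _h : a + n0 ≤ K,
      ∀ i : Fin n0, u ⟨a + i.1, by have := i.isLt; omega⟩ = vstar i with hPdef
    have hsplit := Finset.sum_filter_add_sum_filter_not univ P
      (fun u => pc s G (K+n) (cat u v))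
    rw [sum_pc_cat (s := s) (G := G) K n v, ← hqdef] at hsplit
    -- good part
    have hgood : ∑ u ∈ univ.filter (fun u => P u), pc s G (K+n) (cat u v) ≤ q^K * mstar := by
      have hall : ∀ u ∈ univ.filter (fun u => P u), pc s G (K+n) (cat u v) = mstar := by
        intro u hu
        obtain ⟨a, haK, hocc⟩ := (mem_filter.mp hu).2
        refine claimC (K+n) (cat u v) a (by omega) (fun i => ?_)
        have hlt : a + i.1 < K := by have := i.isLt; omega
        have hcat : (cat u v) (⟨a + i.1, by have := i.isLt; omega⟩ : Fin (K+n))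
            = u ⟨a + i.1, hlt⟩ := dif_pos hlt
        rw [hcat]
        exact hocc i
      rw [Finset.sum_congr rfl hall, Finset.sum_const, smul_eq_mul]
      have hcle : (univ.filter (fun u => P u)).card ≤ q^K := by
        calc (univ.filter (fun u => P u)).card ≤ (univ : Finset (Fin K → A)).card :=
              Finset.card_filter_le _ _
          _ = q^K := by rw [card_univ, Fintype.card_fun, Fintype.card_fin]
      exact Nat.mul_le_mul_right mstar hcle
    -- bad part: count of preimages of bad words
    have hbadcount : ∑ u ∈ univ.filter (fun u => ¬ P u), pc s G K u
        ≤ (q^B - 1)^t * q^(2*s) := by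
      have h1 : ∑ u ∈ univ.filter (fun u => ¬ P u), pc s G K u
          = (univ.filter (fun x : Fin (K+2*s) → A => ¬ P (wmap s G K x))).card := by
        have h := Finset.card_eq_sum_card_fiberwise (f := wmap s G K)
          (s := univ.filter (fun x => ¬ P (wmap s G K x)))
          (t := univ.filter (fun u => ¬ P u))
          (fun x hx => by
            simp only [Finset.mem_coe, mem_filter, mem_univ, true_and] at hx ⊢
            exact hx)
        rw [h]
        refine (Finset.sum_congr rfl (fun u hu => ?_))
        simp only [mem_filter, mem_univ, true_and] at hu
        have hset : Finset.filter (fun x : Fin (K+2*s) → A => wmap s G K x = u)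
            (univ.filter (fun x => ¬ P (wmap s G K x))) = pre s G K u := by
          ext x
          simp only [pre, mem_filter, mem_univ, true_and]
          constructor
          · rintro ⟨_, hx2⟩; exact hx2
          · intro hx; exact ⟨by rw [hx]; exact hu, hx⟩
        rw [hset]
        rfl
      rw [h1]
      -- injection into (blocks ≠ xi) × tail
      have hcard : Fintype.card ((Fin t → {w : Fin B → A // w ≠ xi}) × (Fin (2*s) → A))
          = (q^B - 1)^t * q^(2*s) := by
        rw [Fintype.card_prod, Fintype.card_fun, Fintype.card_fun,
          Fintype.card_fin, Fintype.card_fin]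
        congr 2
        have hcompl := Fintype.card_subtype_compl (fun w : Fin B → A => w = xi)
        rw [Fintype.card_subtype_eq, Fintype.card_fun, Fintype.card_fin] at hcompl
        exact hcompl
      rw [← hcard, ← Fintype.card_coe]
      -- block map
      have hblock : ∀ (x : Fin (K+2*s) → A), ¬ P (wmap s G K x) → ∀ j : Fin t,
          (fun i : Fin B => x ⟨j.1 * B + i.1, by
            have hi := i.isLt
            have hj := j.isLt
            have hm : (j.1+1)*B ≤ t*B := Nat.mul_le_mul_right B hj
            have hs2 : (j.1+1)*B = j.1*B + B := by ring
            omega⟩) ≠ xi := by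
        intro x hx j hblockeq
        apply hx
        refine ⟨j.1 * B, ?_, ?_⟩
        · have hm : (j.1+1)*B ≤ t*B := Nat.mul_le_mul_right B j.isLt
          have hs2 : (j.1+1)*B = j.1*B + B := by ring
          omega
        · intro i
          have hm : (j.1+1)*B ≤ t*B := Nat.mul_le_mul_right B j.isLt
          have hs2 : (j.1+1)*B = j.1*B + B := by ring
          have hiv := i.isLt
          -- value of wmap at position j*B+i
          have hxiv : vstar i = G (fun l : Fin (2*s+1) =>
              xi ⟨i.1 + l.1, by have := l.isLt; omega⟩) := by
            rw [← hxi]; rfl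
          rw [hxiv]
          show G _ = G _
          refine congrArg G (funext fun l => ?_)
          have hl := l.isLt
          have hcf := congrFun hblockeq
            (⟨i.1 + l.1, by simp only [hBdef]; omega⟩ : Fin B)
          simp only at hcf
          rw [← hcf]
          exact congrArg x (Fin.ext (by simp only [Fin.val_mk]; omega))
      refine Fintype.card_le_of_injective (fun xx =>
        ((fun j : Fin t => ⟨(fun i : Fin B => xx.1 ⟨j.1 * B + i.1, by
            have hi := i.isLt
            have hj := j.isLt
            have hm : (j.1+1)*B ≤ t*B := Nat.mul_le_mul_right B hj
            have hs2 : (j.1+1)*B = j.1*B + B := by ring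
            omega⟩),
          hblock xx.1 (by
            have := xx.2
            simp only [mem_filter, mem_univ, true_and] at this
            exact this) j⟩),
         (fun i : Fin (2*s) => xx.1 ⟨K + i.1, by have := i.isLt; omega⟩))) ?_
      intro xx yy heq
      have hB0 : 0 < B := hB1
      apply Subtype.ext
      funext k
      have hkv := k.isLt
      by_cases hk : k.1 < K
      · have hjlt : k.1 / B < t := by
          rw [Nat.div_lt_iff_lt_mul hB0]
          omega
        have hc1 := congrFun (congrArg Prod.fst heq) ⟨k.1 / B, hjlt⟩
        have hc2 := congrArg Subtype.val hc1
        simp only at hc2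
        have hc3 := congrFun hc2 ⟨k.1 % B, Nat.mod_lt _ hB0⟩
        simp only at hc3
        have hidx : k.1 / B * B + k.1 % B = k.1 := Nat.div_add_mod' k.1 B
        calc xx.1 k = xx.1 ⟨k.1 / B * B + k.1 % B, by
              simp only [Fin.val_mk] at *; omega⟩ :=
            congrArg xx.1 (Fin.ext (by simp only [Fin.val_mk]; omega))
          _ = yy.1 ⟨k.1 / B * B + k.1 % B, by simp only [Fin.val_mk] at *; omega⟩ := hc3
          _ = yy.1 k := congrArg yy.1 (Fin.ext (by simp only [Fin.val_mk]; omega))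
      · have hc1 := congrFun (congrArg Prod.snd heq) ⟨k.1 - K, by omega⟩
        simp only at hc1
        calc xx.1 k = xx.1 ⟨K + (k.1 - K), by omega⟩ :=
            congrArg xx.1 (Fin.ext (by simp only [Fin.val_mk]; omega))
          _ = yy.1 ⟨K + (k.1 - K), by omega⟩ := hc1
          _ = yy.1 k := congrArg yy.1 (Fin.ext (by simp only [Fin.val_mk]; omega))
    -- combine
    have hbad : ∑ u ∈ univ.filter (fun u => ¬ P u), pc s G (K+n) (cat u v)
        ≤ ((q^B - 1)^t * q^(2*s)) * pc s G n v := by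
      calc ∑ u ∈ univ.filter (fun u => ¬ P u), pc s G (K+n) (cat u v)
          ≤ ∑ u ∈ univ.filter (fun u => ¬ P u), pc s G K u * pc s G n v :=
            Finset.sum_le_sum (fun u _ => pc_cat_le K n u v)
        _ = (∑ u ∈ univ.filter (fun u => ¬ P u), pc s G K u) * pc s G n v := by
            rw [Finset.sum_mul]
        _ ≤ ((q^B - 1)^t * q^(2*s)) * pc s G n v :=
            Nat.mul_le_mul_right _ hbadcount
    omega
  -- pc is bounded by mstar
  have hub : ∀ n (v : Fin n → A), pc s G n v ≤ mstar := by
    intro n v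
    by_contra hcon
    push_neg at hcon
    obtain ⟨t, ht⟩ := exp_lemma (q^(2*s) * pc s G n v) (q^B) hDB
    have hmain := main n v t
    have hqK : q^(t*B) = (q^B)^t := by rw [mul_comm, pow_mul]
    rw [hqK] at hmain
    have hr : (q^B)^t * (mstar + 1) = (q^B)^t * mstar + (q^B)^t := by ring
    have h2 : (q^B)^t * (mstar + 1) ≤ (q^B)^t * pc s G n v :=
      Nat.mul_le_mul_left _ (by omega)
    have hc : ((q^B - 1)^t * q^(2*s)) * pc s G n v
        = (q^(2*s) * pc s G n v) * (q^B - 1)^t := by ring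
    rw [hc] at hmain
    omega
  have hall : ∀ n (v : Fin n → A), pc s G n v = mstar := fun n v =>
    le_antisymm (hub n v) (hlow n v)
  -- identify mstar
  have hsum := sum_pc (s := s) (G := G) 1
  rw [Finset.sum_congr rfl (fun v _ => hall 1 v), Finset.sum_const, card_univ,
    Fintype.card_fun, Fintype.card_fin, smul_eq_mul] at hsum
  have hq1 : q^1 * mstar = q^(1 + 2*s) := hsum
  have hmq : mstar = q^(2*s) := by
    have hpos : 0 < q^1 := by
      have : 0 < q := by omega
      positivity
    have hpows : q^(1+2*s) = q^1 * q^(2*s) := pow_add q 1 (2*s)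
    rw [hpows] at hq1
    exact Nat.eq_of_mul_eq_mul_left hpos hq1
  intro n v
  rw [hall n v, hmq]
lemma wmap_apply (n : ℕ) (x : Fin (n+2*s) → A) (i : Fin n) :
    wmap s G n x i
      = G (fun j => x ⟨i.1 + j.1, by have := i.isLt; have := j.isLt; omega⟩) := rfl


end CAx
namespace CAx

open Finset
open scoped Classical

variable {A : Type} [Fintype A]

noncomputable instance instFintypeWord (r : ℕ) : Fintype (Word A r) :=
  inferInstanceAs (Fintype (((Finset.Icc (-(r:ℤ)) (r:ℤ)) : Finset ℤ) → A))

/-- canonical extension of a word to a configuration -/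
noncomputable def extw [Nonempty A] {R : ℕ} (w : Word A R) : ℤ → A :=
  fun i => if h : i ∈ Finset.Icc (-(R:ℤ)) (R:ℤ) then w ⟨i, h⟩ else Classical.arbitrary A

lemma extw_spec [Nonempty A] {R : ℕ} (w : Word A R) :
    ∀ j : ((Finset.Icc (-(R:ℤ)) (R:ℤ)) : Finset ℤ), extw w j.1 = w j := by
  intro j
  unfold extw
  rw [dif_pos j.2]

omit [Fintype A] in
lemma hasRadius_mono {r r' : ℕ} {f : (ℤ → A) → (ℤ → A)} (h : r ≤ r') :
    HasRadius r f → HasRadius r' f := by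
  rintro ⟨F, hF, hf⟩
  exact ⟨F, fun x y hxy => hF x y (fun j hj => hxy j (le_trans hj (by exact_mod_cast h))), hf⟩

omit [Fintype A] in
lemma isCA_rad {f : (ℤ → A) → (ℤ → A)} (h : IsCA f) : HasRadius (rad f) f :=
  Nat.sInf_mem h

omit [Fintype A] in
lemma rad_le {r : ℕ} {f : (ℤ → A) → (ℤ → A)} (h : HasRadius r f) : rad f ≤ r :=
  Nat.sInf_le h

omit [Fintype A] in
lemma value_eq {r : ℕ} {f : (ℤ → A) → (ℤ → A)} (hf : HasRadius r f)
    {x y : ℤ → A} (i : ℤ) (hxy : ∀ j : ℤ, |j - i| ≤ (r:ℤ) → x j = y j) :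
    f x i = f y i := by
  obtain ⟨F, hF, hfx⟩ := hf
  rw [hfx, hfx]
  refine hF _ _ (fun j hj => ?_)
  have := hxy (i + j) (by simpa using hj)
  simpa using this

omit [Fintype A] in
lemma shift_comm {r : ℕ} {f : (ℤ → A) → (ℤ → A)} (hf : HasRadius r f)
    (x : ℤ → A) (i : ℤ) : f x i = f (fun k => x (i + k)) 0 := by
  obtain ⟨F, hF, hfx⟩ := hf
  rw [hfx, hfx]
  refine congrArg F (funext fun j => ?_)
  rw [zero_add]

omit [Fintype A] in
lemma hasRadius_comp {t s : ℕ} {f g : (ℤ → A) → (ℤ → A)}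
    (hf : HasRadius t f) (hg : HasRadius s g) : HasRadius (t+s) (f ∘ g) := by
  obtain ⟨F, hF, hfx⟩ := hf
  obtain ⟨Gg, hG, hgx⟩ := hg
  refine ⟨fun z => F (fun j => Gg (fun k => z (j + k))), ?_, ?_⟩
  · intro x y hxy
    refine hF _ _ (fun j hj => ?_)
    refine hG _ _ (fun k hk => ?_)
    refine hxy (j + k) ?_
    push_cast
    calc |j + k| ≤ |j| + |k| := abs_add_le _ _
      _ ≤ t + s := add_le_add hj hk
  · intro x i
    simp only [Function.comp_apply]
    rw [hfx]
    refine congrArg F (funext fun j => ?_)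
    rw [hgx]
    refine congrArg Gg (funext fun k => ?_)
    rw [add_assoc]

lemma mem_diffSet_iff [Nonempty A] {r R : ℕ} {c d : (ℤ → A) → (ℤ → A)}
    (hc : HasRadius r c) (hd : HasRadius r d) (hrR : r ≤ R) (w : Word A R) :
    w ∈ diffSet R c d ↔ c (extw w) 0 ≠ d (extw w) 0 := by
  constructor
  · rintro ⟨x, hx, hne⟩
    have hagree : ∀ j : ℤ, |j - 0| ≤ (r:ℤ) → x j = extw w j := by
      intro j hj
      have hmem : j ∈ Finset.Icc (-(R:ℤ)) (R:ℤ) := by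
        simp only [Finset.mem_Icc]
        rw [sub_zero] at hj
        have : (r:ℤ) ≤ R := by exact_mod_cast hrR
        constructor <;> [linarith [abs_le.mp hj|>.1]; linarith [abs_le.mp hj|>.2]]
      rw [hx ⟨j, hmem⟩, extw_spec w ⟨j, hmem⟩]
    rw [← value_eq hc 0 hagree, ← value_eq hd 0 hagree]
    exact hne
  · intro hne
    exact ⟨extw w, extw_spec w, hne⟩

/-- a map all of whose fibers have cardinality `k` -/
def BalMap {α β : Type} [Fintype α] [DecidableEq β] (k : ℕ) (π : α → β) : Prop :=
  ∀ b, (univ.filter (fun a => π a = b)).card = k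

lemma BalMap.count {α β : Type} [Fintype α] [Fintype β] [DecidableEq β] {k : ℕ} {π : α → β}
    (h : BalMap k π) (T : Finset β) :
    (univ.filter (fun a => π a ∈ T)).card = k * T.card := by
  rw [Finset.card_eq_sum_card_fiberwise (f := π)
    (s := univ.filter (fun a => π a ∈ T)) (t := T)
    (fun a ha => (mem_filter.mp ha).2)]
  have heach : ∀ b ∈ T, (Finset.filter (fun a => π a = b)
      (univ.filter (fun a => π a ∈ T))).card = k := by
    intro b hb
    rw [show Finset.filter (fun a => π a = b) (univ.filter (fun a => π a ∈ T))
        = univ.filter (fun a => π a = b) from ?_]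
    · exact h b
    · ext a
      simp only [mem_filter, mem_univ, true_and]
      constructor
      · rintro ⟨_, h2⟩; exact h2
      · intro h2; exact ⟨by rw [h2]; exact hb, h2⟩
  rw [Finset.sum_congr rfl heach, Finset.sum_const, smul_eq_mul, mul_comm]

/-- restriction along an injection is balanced -/
lemma balmap_restriction {X Y : Type} [Fintype X] [Fintype Y] [DecidableEq X] [DecidableEq Y]
    (f : X → Y) (hf : Function.Injective f) :
    BalMap (Fintype.card A ^ (Fintype.card Y - Fintype.card X))
      (fun g : Y → A => g ∘ f) := by
  intro u
  rw [← Fintype.card_subtype]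
  have hequiv : {g : Y → A // g ∘ f = u} ≃ ({y : Y // ¬ ∃ x, f x = y} → A) := by
    refine ⟨fun gg => fun y => gg.1 y.1,
            fun h0 => ⟨fun y => if hy : ∃ x, f x = y then u hy.choose else h0 ⟨y, hy⟩, ?_⟩,
            ?_, ?_⟩
    · funext x
      simp only [Function.comp_apply]
      rw [dif_pos ⟨x, rfl⟩]
      exact congrArg u (hf (⟨x, rfl⟩ : ∃ x', f x' = f x).choose_spec)
    · rintro ⟨g, hg⟩
      apply Subtype.ext
      funext y
      simp only
      by_cases hy : ∃ x, f x = y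
      · rw [dif_pos hy, ← hg]
        simp only [Function.comp_apply]
        exact congrArg g hy.choose_spec
      · rw [dif_neg hy]
    · intro h0
      funext y
      simp only [dif_neg y.2]
  rw [Fintype.card_congr hequiv, Fintype.card_fun]
  congr 1
  have h1 := Fintype.card_subtype_compl (fun y : Y => ∃ x, f x = y)
  have h2 : Fintype.card {y : Y // ∃ x, f x = y} = Fintype.card X := by
    rw [Fintype.card_congr (Equiv.subtypeEquivRight (q := fun y => y ∈ Set.range f)
      (fun y => by simp [Set.mem_range]))]
    exact (Set.card_range_of_injective hf)
  rw [h1, h2]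

set_option linter.unusedSectionVars false
set_option maxHeartbeats 1000000

lemma card_window (R : ℕ) :
    Fintype.card ((Finset.Icc (-(R:ℤ)) (R:ℤ) : Finset ℤ) : Type) = 2*R+1 := by
  rw [Fintype.card_coe, Int.card_Icc]
  omega

lemma card_word (R : ℕ) : Fintype.card (Word A R) = Fintype.card A ^ (2*R+1) := by
  rw [show Fintype.card (Word A R)
      = Fintype.card (((Finset.Icc (-(R:ℤ)) (R:ℤ) : Finset ℤ) : Type) → A) from rfl,
    Fintype.card_fun, card_window]

/-- the key counting lemma: the number of radius-`R` words on which two radius-`s'`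
CA differ at position `j0` -/
lemma event_count [Nonempty A] {s' R : ℕ} {di d : (ℤ → A) → (ℤ → A)}
    (hdi : HasRadius s' di) (hdd : HasRadius s' d) (j0 : ℤ) (hj : |j0| + (s':ℤ) ≤ (R:ℤ)) :
    (univ.filter (fun w : Word A R => di (extw w) j0 ≠ d (extw w) j0)).card
      = Fintype.card A ^ (2*R - 2*s') * (diffSet s' di d).toFinset.card := by
  classical
  have habs := abs_nonneg j0
  have habs2 := le_abs_self j0
  have habs3 := neg_abs_le j0
  have hemb : ∀ k : ℤ, k ∈ Finset.Icc (-(s':ℤ)) (s':ℤ) → k + j0 ∈ Finset.Icc (-(R:ℤ)) (R:ℤ) := by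
    intro k hk
    simp only [Finset.mem_Icc] at hk ⊢
    omega
  set emb : ((Finset.Icc (-(s':ℤ)) (s':ℤ) : Finset ℤ) : Type) →
      ((Finset.Icc (-(R:ℤ)) (R:ℤ) : Finset ℤ) : Type) :=
    fun kk => ⟨kk.1 + j0, hemb kk.1 kk.2⟩ with hembdef
  have hembinj : Function.Injective emb := by
    intro a b hab
    apply Subtype.ext
    have := congrArg Subtype.val hab
    simp only [hembdef] at this
    omega
  have hkey : ∀ w : Word A R,
      (di (extw w) j0 ≠ d (extw w) j0) ↔ ((w ∘ emb) ∈ (diffSet s' di d).toFinset) := by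
    intro w
    set w' : Word A s' := w ∘ emb with hw'
    have hagree : ∀ k : ℤ, |k - 0| ≤ (s':ℤ) →
        (fun k' => extw w (j0 + k')) k = extw w' k := by
      intro k hk
      rw [sub_zero] at hk
      have hka := le_abs_self k
      have hkb := neg_abs_le k
      have hkmem : k ∈ Finset.Icc (-(s':ℤ)) (s':ℤ) := by
        simp only [Finset.mem_Icc]
        omega
      have h1 : extw w (j0 + k) = w ⟨j0 + k, by
          have := hemb k hkmem
          simp only [Finset.mem_Icc] at this ⊢
          omega⟩ := by
        have := extw_spec w ⟨j0 + k, by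
          have := hemb k hkmem
          simp only [Finset.mem_Icc] at this ⊢
          omega⟩
        exact this
      have h2 : extw w' k = w' ⟨k, hkmem⟩ := extw_spec w' ⟨k, hkmem⟩
      show extw w (j0 + k) = extw w' k
      rw [h1, h2, hw']
      show w _ = w (emb ⟨k, hkmem⟩)
      exact congrArg w (Subtype.ext (by simp only [hembdef]; omega))
    have hdi1 : di (extw w) j0 = di (extw w') 0 := by
      rw [shift_comm hdi (extw w) j0]
      exact value_eq hdi 0 hagree
    have hdd1 : d (extw w) j0 = d (extw w') 0 := by
      rw [shift_comm hdd (extw w) j0]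
      exact value_eq hdd 0 hagree
    rw [hdi1, hdd1]
    exact (Set.mem_toFinset.trans (mem_diffSet_iff hdi hdd (le_refl s') w')).symm
  have hcards : Fintype.card ((Finset.Icc (-(R:ℤ)) (R:ℤ) : Finset ℤ) : Type)
      - Fintype.card ((Finset.Icc (-(s':ℤ)) (s':ℤ) : Finset ℤ) : Type) = 2*R - 2*s' := by
    rw [card_window, card_window]
    omega
  rw [← hcards]
  have hc2 := (balmap_restriction (A := A) emb hembinj).count ((diffSet s' di d).toFinset)
  have hfilt : ∀ (inst : DecidablePred (fun a : ((Finset.Icc (-(R:ℤ)) (R:ℤ) : Finset ℤ) → A) =>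
      a ∘ emb ∈ (diffSet s' di d).toFinset)) (S : Finset (((Finset.Icc (-(R:ℤ)) (R:ℤ) : Finset ℤ)) → A))
      (w : ((Finset.Icc (-(R:ℤ)) (R:ℤ) : Finset ℤ)) → A),
      w ∈ @Finset.filter _ (fun a => a ∘ emb ∈ (diffSet s' di d).toFinset) inst S
        ↔ w ∈ S ∧ w ∘ emb ∈ (diffSet s' di d).toFinset :=
    fun inst S w => Finset.mem_filter
  refine Eq.trans ?_ hc2
  apply Finset.card_bij (fun w _ => w)
  · intro w hw
    simp only [mem_filter, mem_univ, true_and] at hw ⊢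
    exact (hfilt _ _ w).mpr ⟨Finset.mem_univ _, (hkey w).mp hw⟩
  · intro a b _ _ h
    exact h
  · intro w hw
    have hw := ((hfilt _ _ w).mp hw).2
    exact ⟨w, by simp only [mem_filter, mem_univ, true_and]; exact (hkey w).mpr hw, rfl⟩

lemma deltaR_eq_card {r : ℕ} (c d : (ℤ → A) → (ℤ → A)) :
    deltaR r c d = ((diffSet r c d).toFinset.card : ℝ) / (Fintype.card A : ℝ)^(2*r+1) := by
  rw [deltaR, Set.ncard_eq_toFinset_card']

lemma deltaR_nonneg {r : ℕ} (c d : (ℤ → A) → (ℤ → A)) : 0 ≤ deltaR r c d := by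
  rw [deltaR]
  positivity

lemma toFinset_diffSet_eq [Nonempty A] {r R : ℕ} {c d : (ℤ → A) → (ℤ → A)}
    (hc : HasRadius r c) (hd : HasRadius r d) (hrR : r ≤ R) :
    (diffSet R c d).toFinset
      = univ.filter (fun w : Word A R => c (extw w) 0 ≠ d (extw w) 0) := by
  ext w
  rw [Set.mem_toFinset, mem_filter]
  simp only [mem_univ, true_and]
  exact mem_diffSet_iff hc hd hrR w

lemma deltaR_radius_indep [Nonempty A] {r R : ℕ} {c d : (ℤ → A) → (ℤ → A)}
    (hA : 2 ≤ Fintype.card A)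
    (hc : HasRadius r c) (hd : HasRadius r d) (hrR : r ≤ R) :
    deltaR R c d = deltaR r c d := by
  have hq0 : (0:ℝ) < (Fintype.card A : ℝ) := by
    have : 0 < Fintype.card A := by omega
    exact_mod_cast this
  rw [deltaR_eq_card, deltaR_eq_card, toFinset_diffSet_eq hc hd hrR]
  rw [event_count hc hd 0 (by simp; omega)]
  have hsplit : (Fintype.card A : ℝ)^(2*R+1)
      = (Fintype.card A : ℝ)^(2*R - 2*r) * (Fintype.card A : ℝ)^(2*r+1) := by
    rw [← pow_add]
    congr 1
    omega
  push_cast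
  rw [hsplit]
  exact mul_div_mul_left _ _ (by positivity)

/-- the word map of `di` from radius `t'+s'` words to radius `t'` words -/
noncomputable def phiMap [Nonempty A] (di : (ℤ → A) → (ℤ → A)) (t' s' : ℕ) :
    Word A (t'+s') → Word A t' :=
  fun w k => di (extw w) k.1

lemma phi_balanced [Nonempty A] (hA : 2 ≤ Fintype.card A) {s' t' : ℕ}
    {di : (ℤ → A) → (ℤ → A)} (hdi : HasRadius s' di) (hsur : Function.Surjective di) :
    BalMap (Fintype.card A ^ (2*s')) (phiMap di t' s') := by
  classical
  obtain ⟨F, hF, hfx⟩ := hdi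
  have junk : A := Classical.arbitrary A
  set G : (Fin (2*s'+1) → A) → A := fun z =>
    F (fun j : ℤ => if h : 0 ≤ j + s' ∧ j + s' < 2*s'+1 then z ⟨(j+s').toNat, by omega⟩
                    else junk) with hG
  have hGkey : ∀ (x : ℤ → A) (i : ℤ),
      di x i = G (fun l : Fin (2*s'+1) => x (i + l.1 - s')) := by
    intro x i
    rw [hfx]
    show F _ = F _
    refine hF _ _ (fun j hj => ?_)
    have habs1 := abs_le.mp hj
    have hc : 0 ≤ j + s' ∧ j + s' < 2*s'+1 := by omega
    rw [dif_pos hc]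
    show x (i + j) = x (i + ((j + s').toNat : ℤ) - s')
    refine congrArg x ?_
    rw [Int.toNat_of_nonneg hc.1]
    ring
  have hsurjw : ∀ n (v : Fin n → A), 0 < pc s' G n v := by
    intro n v
    set y : ℤ → A := fun i => if h : 0 ≤ i ∧ i < (n:ℤ) then v ⟨i.toNat, by omega⟩ else junk
      with hy
    obtain ⟨x, hx⟩ := hsur y
    refine Finset.card_pos.mpr ⟨fun k : Fin (n+2*s') => x ((k.1:ℤ) - s'), ?_⟩
    simp only [pre, mem_filter, mem_univ, true_and]
    funext i
    have h1 : wmap s' G n (fun k : Fin (n+2*s') => x ((k.1:ℤ) - s')) i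
        = G (fun l : Fin (2*s'+1) => x ((i.1:ℤ) + l.1 - s')) := by
      rw [wmap_apply]
      congr 1
    have h2 : (0:ℤ) ≤ (i.1:ℤ) ∧ (i.1:ℤ) < (n:ℤ) := by
      constructor
      · exact_mod_cast Nat.zero_le i.1
      · exact_mod_cast i.isLt
    rw [h1, ← hGkey x i.1, hx, hy]
    simp only
    rw [dif_pos h2]
    refine congrArg v (Fin.ext ?_)
    simp
  have hbal := pc_balance (s := s') (G := G) hA hsurjw
  intro v'
  rw [← hbal (2*t'+1) (fun k : Fin (2*t'+1) => v' ⟨(k.1:ℤ) - t', by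
    have := k.isLt
    simp only [Finset.mem_Icc]
    omega⟩)]
  set n := 2*t'+1 with hn
  set e2 : Word A t' → (Fin n → A) := fun w k => w ⟨(k.1:ℤ) - t', by
    have := k.isLt
    simp only [Finset.mem_Icc]
    omega⟩ with he2
  set e1 : Word A (t'+s') → (Fin (n+2*s') → A) := fun w k => w ⟨(k.1:ℤ) - (t'+s'), by
    have := k.isLt
    simp only [Finset.mem_Icc]
    push_cast
    omega⟩ with he1
  have he2inj : Function.Injective e2 := by
    intro a b hab
    funext j
    have hj := j.2
    simp only [Finset.mem_Icc] at hj
    have hk : (j.1 + t').toNat < n := by omega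
    have := congrFun hab ⟨(j.1 + t').toNat, hk⟩
    simp only [he2] at this
    have hidx : ((((j.1 + t').toNat : ℕ)):ℤ) - t' = j.1 := by omega
    calc a j = a ⟨(((j.1 + t').toNat : ℕ):ℤ) - t', by rw [hidx]; exact j.2⟩ := by
          refine congrArg a (Subtype.ext ?_)
          simp only
          omega
      _ = b ⟨(((j.1 + t').toNat : ℕ):ℤ) - t', by rw [hidx]; exact j.2⟩ := this
      _ = b j := by
          refine congrArg b (Subtype.ext ?_)
          simp only
          omega
  have hcomm : ∀ w : Word A (t'+s'), wmap s' G n (e1 w) = e2 (phiMap di t' s' w) := by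
    intro w
    funext i
    have hi := i.isLt
    rw [wmap_apply]
    simp only [he2]
    rw [show phiMap di t' s' w ⟨(i.1:ℤ) - t', by
        simp only [Finset.mem_Icc]; omega⟩ = di (extw w) ((i.1:ℤ) - t') from rfl]
    rw [hGkey (extw w) ((i.1:ℤ) - t')]
    have hfuneq : (fun j : Fin (2*s'+1) => e1 w ⟨i.1 + j.1, by
        have := i.isLt; have := j.isLt; omega⟩)
        = (fun l : Fin (2*s'+1) => extw w ((i.1:ℤ) - t' + l.1 - s')) := by
      funext l
      have hl := l.isLt
      have hmem : ((i.1:ℤ) - t' + l.1 - s') ∈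
          Finset.Icc (-((t'+s':ℕ):ℤ)) ((t'+s':ℕ):ℤ) := by
        simp only [Finset.mem_Icc]
        push_cast
        omega
      rw [show extw w ((i.1:ℤ) - t' + l.1 - s') = w ⟨_, hmem⟩ from extw_spec w ⟨_, hmem⟩]
      simp only [he1]
      refine congrArg w (Subtype.ext ?_)
      simp only
      push_cast
      ring
    rw [hfuneq]
  -- bijection
  refine Finset.card_bij (fun w _ => e1 w) ?_ ?_ ?_
  · intro w hw
    simp only [mem_filter, mem_univ, true_and] at hw
    simp only [pre, mem_filter, mem_univ, true_and]
    rw [hcomm w, hw]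
  · intro a ha b hb hab
    funext j
    have hj := j.2
    simp only [Finset.mem_Icc] at hj
    have hk : (j.1 + (t'+s':ℕ)).toNat < n + 2*s' := by push_cast at hj ⊢; omega
    have := congrFun hab ⟨(j.1 + (t'+s':ℕ)).toNat, hk⟩
    simp only [he1] at this
    calc a j = a ⟨((((j.1 + (t'+s':ℕ)).toNat : ℕ)):ℤ) - (t'+s':ℕ), by
          refine Finset.mem_Icc.mpr ?_
          push_cast at hj ⊢
          omega⟩ := by
          refine congrArg a (Subtype.ext ?_)
          simp only
          push_cast at hj ⊢
          omega
      _ = b ⟨((((j.1 + (t'+s':ℕ)).toNat : ℕ)):ℤ) - (t'+s':ℕ), by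
          refine Finset.mem_Icc.mpr ?_
          push_cast at hj ⊢
          omega⟩ := this
      _ = b j := by
          refine congrArg b (Subtype.ext ?_)
          simp only
          push_cast at hj ⊢
          omega
  · intro u hu
    simp only [pre, mem_filter, mem_univ, true_and] at hu
    refine ⟨(fun j => u ⟨(j.1 + (t'+s':ℕ)).toNat, by
      have hj := j.2
      simp only [Finset.mem_Icc] at hj
      push_cast at hj ⊢
      omega⟩ : Word A (t'+s')), ?_, ?_⟩
    · refine Finset.mem_filter.mpr ⟨Finset.mem_univ _, ?_⟩
      set w0 : Word A (t'+s') := fun j => u ⟨(j.1 + (t'+s':ℕ)).toNat, by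
        have hj := j.2
        simp only [Finset.mem_Icc] at hj
        push_cast at hj ⊢
        omega⟩ with hw0
      have he1w0 : e1 w0 = u := by
        funext k
        simp only [he1, hw0]
        refine congrArg u (Fin.ext ?_)
        simp only
        have := k.isLt
        push_cast
        omega
      refine he2inj ?_
      rw [← hcomm w0, he1w0, hu]
    · funext k
      simp only [he1]
      refine congrArg u (Fin.ext ?_)
      simp only
      have := k.isLt
      push_cast
      omega
  done
lemma delta_nonneg (c d : (ℤ → A) → (ℤ → A)) : 0 ≤ delta c d := deltaR_nonneg c d

/-- master inequality -/
lemma master [Nonempty A] (hA : 2 ≤ Fintype.card A)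
    (ci di c d : (ℤ → A) → (ℤ → A))
    (hci : IsCA ci) (hdi : IsCA di) (hc : IsCA c) (hd : IsCA d)
    (hsur : Function.Surjective di) :
    delta (ci ∘ di) (c ∘ d) ≤ delta ci c + (2*(rad c : ℝ) + 1) * delta di d := by
  classical
  set t := max (rad ci) (rad c) with ht
  set s' := max (rad di) (rad d) with hs'
  have hcit : HasRadius t ci := hasRadius_mono (le_max_left _ _) (isCA_rad hci)
  have hct : HasRadius t c := hasRadius_mono (le_max_right _ _) (isCA_rad hc)
  have hdis : HasRadius s' di := hasRadius_mono (le_max_left _ _) (isCA_rad hdi)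
  have hds : HasRadius s' d := hasRadius_mono (le_max_right _ _) (isCA_rad hd)
  have hcrc : HasRadius (rad c) c := isCA_rad hc
  have hrct : rad c ≤ t := le_max_right _ _
  have hcomp1 : HasRadius (t+s') (ci ∘ di) := hasRadius_comp hcit hdis
  have hcomp2 : HasRadius (t+s') (c ∘ d) := hasRadius_comp hct hds
  have hr01 : HasRadius (max (rad (ci ∘ di)) (rad (c ∘ d))) (ci ∘ di) :=
    hasRadius_mono (le_max_left _ _) (isCA_rad ⟨t+s', hcomp1⟩)
  have hr02 : HasRadius (max (rad (ci ∘ di)) (rad (c ∘ d))) (c ∘ d) :=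
    hasRadius_mono (le_max_right _ _) (isCA_rad ⟨t+s', hcomp2⟩)
  have hr0R : max (rad (ci ∘ di)) (rad (c ∘ d)) ≤ t + s' :=
    max_le (rad_le hcomp1) (rad_le hcomp2)
  have hd1 : delta (ci ∘ di) (c ∘ d) = deltaR (t+s') (ci ∘ di) (c ∘ d) := by
    rw [delta]
    exact (deltaR_radius_indep hA hr01 hr02 hr0R).symm
  set Tc := (diffSet t ci c).toFinset with hTc
  set Td := (diffSet s' di d).toFinset with hTd
  -- the subset property
  have hsub : (diffSet (t+s') (ci ∘ di) (c ∘ d)).toFinset ⊆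
      (univ.filter (fun w : Word A (t+s') => phiMap di t s' w ∈ Tc))
      ∪ (Finset.Icc (-(rad c:ℤ)) (rad c:ℤ)).biUnion
          (fun j0 => univ.filter (fun w : Word A (t+s') =>
            di (extw w) j0 ≠ d (extw w) j0)) := by
    intro w hw
    rw [Set.mem_toFinset, mem_diffSet_iff hcomp1 hcomp2 (le_refl _) w] at hw
    simp only [Function.comp_apply] at hw
    by_cases h1 : ci (di (extw w)) 0 = c (di (extw w)) 0
    · rw [h1] at hw
      have h3 : ∃ j0 : ℤ, |j0| ≤ (rad c:ℤ) ∧ di (extw w) j0 ≠ d (extw w) j0 := by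
        by_contra hno
        push_neg at hno
        refine hw (value_eq hcrc 0 (fun j hj => ?_))
        rw [sub_zero] at hj
        exact hno j hj
      obtain ⟨j0, hj0, hne⟩ := h3
      refine Finset.mem_union_right _ (Finset.mem_biUnion.mpr ⟨j0, ?_, ?_⟩)
      · simp only [Finset.mem_Icc]
        have := abs_le.mp hj0
        omega
      · simp only [mem_filter, mem_univ, true_and]
        exact hne
    · refine Finset.mem_union_left _ ?_
      simp only [mem_filter, mem_univ, true_and]
      rw [hTc, Set.mem_toFinset, mem_diffSet_iff hcit hct (le_refl t)]
      have hagree : ∀ j : ℤ, |j - 0| ≤ (t:ℤ) →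
          di (extw w) j = extw (phiMap di t s' w) j := by
        intro j hj
        rw [sub_zero] at hj
        have hjmem : j ∈ Finset.Icc (-(t:ℤ)) (t:ℤ) := by
          simp only [Finset.mem_Icc]
          have := abs_le.mp hj
          omega
        rw [show extw (phiMap di t s' w) j = phiMap di t s' w ⟨j, hjmem⟩ from
          extw_spec _ ⟨j, hjmem⟩]
        rfl
      have hci2 : ci (di (extw w)) 0 = ci (extw (phiMap di t s' w)) 0 :=
        value_eq hcit 0 hagree
      have hc2 : c (di (extw w)) 0 = c (extw (phiMap di t s' w)) 0 :=
        value_eq hct 0 hagree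
      rw [← hci2, ← hc2]
      exact h1
  -- cardinal bounds
  have hE1 := (phi_balanced (t' := t) hA hdis hsur).count Tc
  have hE2 : ∀ j0 ∈ Finset.Icc (-(rad c:ℤ)) (rad c:ℤ),
      (univ.filter (fun w : Word A (t+s') =>
        di (extw w) j0 ≠ d (extw w) j0)).card
      = Fintype.card A ^ (2*(t+s') - 2*s') * Td.card := by
    intro j0 hj0
    simp only [Finset.mem_Icc] at hj0
    refine event_count hdis hds j0 ?_
    have h2 : |j0| ≤ (rad c:ℤ) := abs_le.mpr ⟨hj0.1, hj0.2⟩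
    have h3 : (rad c:ℤ) ≤ (t:ℤ) := by exact_mod_cast hrct
    push_cast
    omega
  have hcount : ((diffSet (t+s') (ci ∘ di) (c ∘ d)).toFinset.card : ℕ)
      ≤ Fintype.card A ^ (2*s') * Tc.card
        + (2*(rad c) + 1) * (Fintype.card A ^ (2*t) * Td.card) := by
    calc (diffSet (t+s') (ci ∘ di) (c ∘ d)).toFinset.card
        ≤ ((univ.filter (fun w : Word A (t+s') => phiMap di t s' w ∈ Tc))
          ∪ (Finset.Icc (-(rad c:ℤ)) (rad c:ℤ)).biUnion
              (fun j0 => univ.filter (fun w : Word A (t+s') =>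
                di (extw w) j0 ≠ d (extw w) j0))).card := Finset.card_le_card hsub
      _ ≤ (univ.filter (fun w : Word A (t+s') => phiMap di t s' w ∈ Tc)).card
          + ((Finset.Icc (-(rad c:ℤ)) (rad c:ℤ)).biUnion
              (fun j0 => univ.filter (fun w : Word A (t+s') =>
                di (extw w) j0 ≠ d (extw w) j0))).card := Finset.card_union_le _ _
      _ ≤ Fintype.card A ^ (2*s') * Tc.card
          + ∑ j0 ∈ Finset.Icc (-(rad c:ℤ)) (rad c:ℤ),
              (univ.filter (fun w : Word A (t+s') =>
                di (extw w) j0 ≠ d (extw w) j0)).card := by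
            refine add_le_add (le_of_eq hE1) ?_
            exact Finset.card_biUnion_le
      _ = Fintype.card A ^ (2*s') * Tc.card
          + (2*(rad c) + 1) * (Fintype.card A ^ (2*(t+s') - 2*s') * Td.card) := by
            rw [Finset.sum_congr rfl hE2, Finset.sum_const, smul_eq_mul]
            congr 2
            rw [Int.card_Icc]
            omega
      _ = _ := by
            have hexp : 2*(t+s') - 2*s' = 2*t := by omega
            rw [hexp]
  -- real arithmetic
  have hq0 : (0:ℝ) < (Fintype.card A : ℝ) := by
    have h2 : 0 < Fintype.card A := by omega
    exact_mod_cast h2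
  have hqne : ∀ m : ℕ, ((Fintype.card A : ℝ))^m ≠ 0 := fun m => by positivity
  rw [hd1, deltaR_eq_card]
  have hdc : delta ci c = ((Tc.card : ℝ)) / (Fintype.card A : ℝ)^(2*t+1) := by
    rw [delta, ← ht, deltaR_eq_card, hTc]
  have hdd : delta di d = ((Td.card : ℝ)) / (Fintype.card A : ℝ)^(2*s'+1) := by
    rw [delta, ← hs', deltaR_eq_card, hTd]
  rw [hdc, hdd]
  have hcast : ((diffSet (t+s') (ci ∘ di) (c ∘ d)).toFinset.card : ℝ)
      ≤ (Fintype.card A:ℝ) ^ (2*s') * Tc.card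
        + (2*(rad c:ℝ) + 1) * ((Fintype.card A:ℝ) ^ (2*t) * Td.card) := by
    have := hcount
    have hc2 : ((diffSet (t+s') (ci ∘ di) (c ∘ d)).toFinset.card : ℝ)
        ≤ ((Fintype.card A ^ (2*s') * Tc.card
          + (2*(rad c) + 1) * (Fintype.card A ^ (2*t) * Td.card) : ℕ) : ℝ) := by
      exact_mod_cast this
    calc ((diffSet (t+s') (ci ∘ di) (c ∘ d)).toFinset.card : ℝ)
        ≤ _ := hc2
      _ = _ := by push_cast; ring
  have hpow1 : (Fintype.card A:ℝ)^(2*(t+s')+1)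
      = (Fintype.card A:ℝ)^(2*s') * (Fintype.card A:ℝ)^(2*t+1) := by
    rw [← pow_add]
    congr 1
    ring
  have hpow2 : (Fintype.card A:ℝ)^(2*(t+s')+1)
      = (Fintype.card A:ℝ)^(2*t) * (Fintype.card A:ℝ)^(2*s'+1) := by
    rw [← pow_add]
    congr 1
    ring
  calc ((diffSet (t+s') (ci ∘ di) (c ∘ d)).toFinset.card : ℝ)
        / (Fintype.card A:ℝ)^(2*(t+s')+1)
      ≤ ((Fintype.card A:ℝ) ^ (2*s') * Tc.card
        + (2*(rad c:ℝ) + 1) * ((Fintype.card A:ℝ) ^ (2*t) * Td.card))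
        / (Fintype.card A:ℝ)^(2*(t+s')+1) := by
          gcongr
    _ = (Tc.card:ℝ) / (Fintype.card A:ℝ)^(2*t+1)
        + (2*(rad c:ℝ) + 1) * ((Td.card:ℝ) / (Fintype.card A:ℝ)^(2*s'+1)) := by
          rw [add_div]
          congr 1
          · rw [hpow1, mul_div_mul_left _ _ (hqne (2*s'))]
          · rw [hpow2, show (2*(rad c:ℝ) + 1) * ((Fintype.card A:ℝ) ^ (2*t) * (Td.card:ℝ))
                = (Fintype.card A:ℝ) ^ (2*t) * ((2*(rad c:ℝ) + 1) * (Td.card:ℝ)) from by ring,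
              mul_div_mul_left _ _ (hqne (2*t)), mul_div_assoc]

end CAx

/-- composition restricted to `CA × SUR` is continuous, with the
quantitative bound `δ(cᵢ ∘ dᵢ, c ∘ d) < (2 r(c) + 2) ε`. -/
theorem stmt3 {A : Type} [Fintype A] (hA : 2 ≤ Fintype.card A) :
    (∀ (cs ds : ℕ → (ℤ → A) → (ℤ → A)) (c d : (ℤ → A) → (ℤ → A)),
      (∀ i, IsCA (cs i)) → (∀ i, IsCA (ds i)) → IsCA c → IsCA d →
      (∀ i, Function.Surjective (ds i)) → Function.Surjective d →
      Tendsto (fun i => delta (cs i) c) atTop (nhds 0) →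
      Tendsto (fun i => delta (ds i) d) atTop (nhds 0) →
      Tendsto (fun i => delta (cs i ∘ ds i) (c ∘ d)) atTop (nhds 0)) ∧
    (∀ (ci di c d : (ℤ → A) → (ℤ → A)) (ε : ℝ),
      IsCA ci → IsCA di → IsCA c → IsCA d →
      Function.Surjective di →
      rad c ≤ rad ci → rad d ≤ rad di →
      delta ci c < ε → delta di d < ε →
      delta (ci ∘ di) (c ∘ d) < (2 * (rad c : ℝ) + 2) * ε) := by
  haveI : Nonempty A := Fintype.card_pos_iff.mp (by omega)
  constructor
  · intro cs ds c d hcs hds hc hd hdssur _hdsur hc0 hd0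
    have hbound : ∀ i, delta (cs i ∘ ds i) (c ∘ d)
        ≤ delta (cs i) c + (2*(rad c:ℝ)+1) * delta (ds i) d :=
      fun i => CAx.master hA (cs i) (ds i) c d (hcs i) (hds i) hc hd (hdssur i)
    refine squeeze_zero (fun i => CAx.delta_nonneg _ _) hbound ?_
    have h := hc0.add (hd0.const_mul (2*(rad c:ℝ)+1))
    simpa using h
  · intro ci di c d ε hci hdi hc hd hsur _hrc _hrd hepsc hepsd
    have h0 : 0 ≤ delta ci c := CAx.delta_nonneg _ _
    have heps : 0 < ε := lt_of_le_of_lt h0 hepsc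
    have hm := CAx.master hA ci di c d hci hdi hc hd hsur
    have hK : (0:ℝ) < 2*(rad c:ℝ)+1 := by positivity
    calc delta (ci ∘ di) (c ∘ d)
        ≤ delta ci c + (2*(rad c:ℝ)+1) * delta di d := hm
      _ < ε + (2*(rad c:ℝ)+1) * ε := by
          have h2 := mul_lt_mul_of_pos_left hepsd hK
          linarith
      _ = (2 * (rad c : ℝ) + 2) * ε := by ring
end

section
/- Inversion is continuous on the set REV of reversible cellular automata with the uniform Bernoulli metric: if c is reversible and d is reversible with r(d) > r(c) and r(d⁻¹) > r(c⁻¹), then δ(c⁻¹, d⁻¹) ≤ (2·r(c⁻¹)+1) · δ(c, d). -/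
open MeasureTheory Filter Function

section AuxProof

open Finset Function

attribute [local instance] Classical.propDecidable
set_option linter.unusedSectionVars false

variable {A : Type} [Fintype A] [Nonempty A]

/-- canonical padding element -/
noncomputable def padA (A : Type) [Nonempty A] : A := Classical.arbitrary A

/-- extend a word to a configuration by padding -/
noncomputable def extW (t : Finset ℤ) (u : ↥t → A) : ℤ → A :=
  fun j => if h : j ∈ t then u ⟨j, h⟩ else padA A

lemma extW_mem {t : Finset ℤ} (u : ↥t → A) (j : ↥t) :
    extW t u j.1 = u j := by
  simp [extW, j.2]

/-- the cylinder-type set of words on `t` compatible with `P` -/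
def liftSet (t : Finset ℤ) (P : (ℤ → A) → Prop) : Set (↥t → A) :=
  {u | ∃ x : ℤ → A, (∀ j : ↥t, x j.1 = u j) ∧ P x}

/-- `P` only depends on coordinates in `s` -/
def LocalOn (s : Finset ℤ) (P : (ℤ → A) → Prop) : Prop :=
  ∀ x y : ℤ → A, (∀ j ∈ s, x j = y j) → P x → P y

lemma LocalOn.mono {s s' : Finset ℤ} {P : (ℤ → A) → Prop} (h : LocalOn s P)
    (hss : s ⊆ s') : LocalOn s' P :=
  fun x y hxy => h x y (fun j hj => hxy j (hss hj))

lemma mem_liftSet_iff {s t : Finset ℤ} (hst : s ⊆ t) {P : (ℤ → A) → Prop}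
    (hP : LocalOn s P) {u : ↥t → A} :
    u ∈ liftSet t P ↔ P (extW t u) := by
  constructor
  · rintro ⟨x, hx, hPx⟩
    refine hP x (extW t u) (fun j hj => ?_) hPx
    rw [extW_mem u ⟨j, hst hj⟩]; exact hx ⟨j, hst hj⟩
  · intro h
    exact ⟨extW t u, fun j => extW_mem u j, h⟩

lemma liftSet_congr {t : Finset ℤ} {P Q : (ℤ → A) → Prop} (h : ∀ x, P x ↔ Q x) :
    liftSet t P = liftSet t Q := by
  unfold liftSet; ext u
  constructor
  · rintro ⟨x, hx, hp⟩; exact ⟨x, hx, (h x).mp hp⟩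
  · rintro ⟨x, hx, hp⟩; exact ⟨x, hx, (h x).mpr hp⟩

lemma HasRadius.mono {f : (ℤ → A) → (ℤ → A)} {r r' : ℕ} (h : HasRadius r f)
    (hrr : r ≤ r') : HasRadius r' f := by
  obtain ⟨F, hF, hFc⟩ := h
  exact ⟨F, fun x y hxy => hF x y (fun j hj => hxy j (hj.trans (by exact_mod_cast hrr))), hFc⟩

lemma IsCA.hasRadius_rad {f : (ℤ → A) → (ℤ → A)} (h : IsCA f) : HasRadius (rad f) f :=
  Nat.sInf_mem h

lemma HasRadius.local_eq {f : (ℤ → A) → (ℤ → A)} {r : ℕ} (h : HasRadius r f)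
    {x y : ℤ → A} {i : ℤ} (hxy : ∀ j ∈ Finset.Icc (i - r) (i + r), x j = y j) :
    f x i = f y i := by
  obtain ⟨F, hF, hFc⟩ := h
  rw [hFc, hFc]
  apply hF
  intro j hj
  apply hxy
  rw [Finset.mem_Icc]
  rw [abs_le] at hj
  omega

lemma HasRadius.shift_apply {f : (ℤ → A) → (ℤ → A)} {r : ℕ} (h : HasRadius r f)
    (x : ℤ → A) (i k : ℤ) :
    f (fun j => x (i + j)) k = f x (i + k) := by
  obtain ⟨F, hF, hFc⟩ := h
  rw [hFc, hFc]
  congr 1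
  funext j
  ring_nf

/-- The key counting lemma: if `P` only depends on coordinates in `s ⊆ t`, then
the number of `t`-words compatible with `P` is the number of `s`-words compatible
with `P` times `|A| ^ (t.card - s.card)`. -/
lemma card_liftSet_subset {s t : Finset ℤ} (hst : s ⊆ t) {P : (ℤ → A) → Prop}
    (hP : LocalOn s P) :
    Nat.card (liftSet t P) =
      Nat.card (liftSet s P) * Fintype.card A ^ (t.card - s.card) := by
  classical
  have e : liftSet t P ≃ (liftSet s P) × (↥(t \ s) → A) := by
    refine
      { toFun := fun u =>
          (⟨fun j => u.1 ⟨j.1, hst j.2⟩, ?_⟩, fun j => u.1 ⟨j.1, (Finset.mem_sdiff.mp j.2).1⟩)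
        invFun := fun v =>
          ⟨fun j => if hj : j.1 ∈ s then v.1.1 ⟨j.1, hj⟩
            else v.2 ⟨j.1, Finset.mem_sdiff.mpr ⟨j.2, hj⟩⟩, ?_⟩
        left_inv := ?_, right_inv := ?_ }
    · -- restriction is in liftSet s P
      obtain ⟨x, hx, hPx⟩ := u.2
      exact ⟨x, fun j => hx ⟨j.1, hst j.2⟩, hPx⟩
    · -- glued word is in liftSet t P
      obtain ⟨x, hx, hPx⟩ := v.1.2
      refine ⟨fun j => if hj : j ∈ t then
          (if hjs : j ∈ s then v.1.1 ⟨j, hjs⟩ else v.2 ⟨j, Finset.mem_sdiff.mpr ⟨hj, hjs⟩⟩)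
          else x j, fun j => ?_, ?_⟩
      · simp only [j.2, dif_pos]
      · refine hP x _ (fun j hj => ?_) hPx
        simp only [hst hj, hj, dif_pos]
        exact hx ⟨j, hj⟩
    · intro u
      apply Subtype.ext
      funext j
      by_cases hj : j.1 ∈ s <;> simp [hj]
    · intro v
      apply Prod.ext
      · apply Subtype.ext
        funext j
        simp [j.2, hst j.2]
      · funext j
        have hj := Finset.mem_sdiff.mp j.2
        simp [hj.1, hj.2]
  rw [Nat.card_congr e, Nat.card_prod]
  congr 1
  rw [Nat.card_eq_fintype_card, Fintype.card_fun, Fintype.card_coe,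
    Finset.card_sdiff_of_subset hst]
/-- translation invariance of the counts -/
lemma card_liftSet_translate (i a b : ℤ) (P : (ℤ → A) → Prop) :
    Nat.card (liftSet (Finset.Icc (a + i) (b + i)) P) =
      Nat.card (liftSet (Finset.Icc a b) (fun x => P (fun j => x (j - i)))) := by
  apply Nat.card_congr
  have hmem : ∀ j : ℤ, j ∈ Finset.Icc a b ↔ j + i ∈ Finset.Icc (a + i) (b + i) := by
    intro j; simp only [Finset.mem_Icc]; omega
  have hmem' : ∀ j : ℤ, j ∈ Finset.Icc (a + i) (b + i) ↔ j - i ∈ Finset.Icc a b := by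
    intro j; simp only [Finset.mem_Icc]; omega
  refine
    { toFun := fun u => ⟨fun j => u.1 ⟨j.1 + i, (hmem j.1).mp j.2⟩, ?_⟩
      invFun := fun v => ⟨fun j => v.1 ⟨j.1 - i, (hmem' j.1).mp j.2⟩, ?_⟩
      left_inv := ?_, right_inv := ?_ }
  · obtain ⟨x, hx, hPx⟩ := u.2
    refine ⟨fun j => x (j + i), fun j => hx ⟨j.1 + i, (hmem j.1).mp j.2⟩, ?_⟩
    have : (fun j => x (j + i - i)) = x := by funext j; congr 1; omega
    simpa [this] using hPx
  · obtain ⟨x, hx, hPx⟩ := v.2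
    refine ⟨fun j => x (j - i), fun j => hx ⟨j.1 - i, (hmem' j.1).mp j.2⟩, hPx⟩
  · intro u
    apply Subtype.ext
    funext j
    have hval : j.1 - i + i = j.1 := by omega
    have : (⟨j.1 - i + i, (hmem _).mp ((hmem' j.1).mp j.2)⟩ : ↥(Finset.Icc (a+i) (b+i))) = j :=
      Subtype.ext hval
    exact congrArg u.1 this
  · intro v
    apply Subtype.ext
    funext j
    have hval : j.1 + i - i = j.1 := by omega
    have : (⟨j.1 + i - i, (hmem' _).mp ((hmem j.1).mp j.2)⟩ : ↥(Finset.Icc a b)) = j :=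
      Subtype.ext hval
    exact congrArg v.1 this

lemma diffSet_eq_liftSet (r : ℕ) (c d : (ℤ → A) → (ℤ → A)) :
    diffSet r c d = liftSet (Finset.Icc (-(r : ℤ)) (r : ℤ)) (fun x => c x 0 ≠ d x 0) := rfl

/-- a sum of naturals, each at least `μ`, summing to `card * μ`, is constant. -/
lemma sum_rigid {β : Type*} {s : Finset β} {g : β → ℕ} {μ : ℕ}
    (h : ∀ b ∈ s, μ ≤ g b) (hsum : ∑ b ∈ s, g b = s.card * μ) :
    ∀ b ∈ s, g b = μ := by
  by_contra hcon
  push_neg at hcon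
  obtain ⟨b0, hb0, hne⟩ := hcon
  have hlt : s.card * μ < ∑ b ∈ s, g b := by
    calc s.card * μ = ∑ _b ∈ s, μ := by rw [Finset.sum_const, smul_eq_mul, mul_comm]
    _ < ∑ b ∈ s, g b := by
      apply Finset.sum_lt_sum (fun b hb => h b hb)
      exact ⟨b0, hb0, lt_of_le_of_ne (h b0 hb0) (Ne.symm hne)⟩
  omega

lemma natCard_set_eq_card_filter {X : Type*} [Fintype X] (S : Set X) :
    Nat.card S = (Finset.univ.filter (· ∈ S)).card := by
  classical
  rw [Nat.card_eq_fintype_card]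
  exact Fintype.card_subtype _
/-- the number of preimage words of the word `w|[a,b]` under the word map of `f` -/
noncomputable def pcount (f : (ℤ → A) → (ℤ → A)) (r : ℕ) (a b : ℤ) (w : ℤ → A) : ℕ :=
  Nat.card
    (liftSet (Finset.Icc (a - r) (b + r)) (fun x => ∀ j ∈ Finset.Icc a b, f x j = w j))

lemma localOn_wordCond {f : (ℤ → A) → (ℤ → A)} {r : ℕ} (hrad : HasRadius r f)
    (a b : ℤ) (w : ℤ → A) :
    LocalOn (Finset.Icc (a - r) (b + r)) (fun x => ∀ j ∈ Finset.Icc a b, f x j = w j) := by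
  intro x y hxy h j hj
  rw [Finset.mem_Icc] at hj
  have : f x j = f y j := by
    apply hrad.local_eq
    intro j' hj'
    rw [Finset.mem_Icc] at hj'
    exact hxy j' (by rw [Finset.mem_Icc]; omega)
  rw [← this]
  exact h j (by rw [Finset.mem_Icc]; omega)

lemma pcount_congr {f : (ℤ → A) → (ℤ → A)} {r : ℕ} {a b : ℤ} {w w' : ℤ → A}
    (h : ∀ j ∈ Finset.Icc a b, w j = w' j) :
    pcount f r a b w = pcount f r a b w' := by
  unfold pcount
  have hset : liftSet (Finset.Icc (a - (r:ℤ)) (b + r)) (fun x => ∀ j ∈ Finset.Icc a b, f x j = w j)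
      = liftSet (Finset.Icc (a - (r:ℤ)) (b + r)) (fun x => ∀ j ∈ Finset.Icc a b, f x j = w' j) := by
    apply liftSet_congr
    intro x
    constructor
    · intro hx j hj; rw [← h j hj]; exact hx j hj
    · intro hx j hj; rw [h j hj]; exact hx j hj
  rw [hset]

lemma pcount_eq_card_fiber {f : (ℤ → A) → (ℤ → A)} {r : ℕ} (hrad : HasRadius r f)
    (a b : ℤ) (w : ↥(Finset.Icc a b) → A) :
    pcount f r a b (extW _ w) =
      (Finset.univ.filter (fun u : ↥(Finset.Icc (a - r) (b + r)) → A =>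
        (fun j : ↥(Finset.Icc a b) => f (extW _ u) j.1) = w)).card := by
  unfold pcount
  rw [natCard_set_eq_card_filter]
  congr 1
  apply Finset.filter_congr
  intro u _
  rw [mem_liftSet_iff (le_refl _) (localOn_wordCond hrad a b _)]
  constructor
  · intro h
    funext j
    rw [← extW_mem w j]
    exact h j.1 j.2
  · intro h j hj
    have := congrFun h ⟨j, hj⟩
    simp only at this
    rw [this, extW_mem w ⟨j, hj⟩]

lemma sum_pcount {f : (ℤ → A) → (ℤ → A)} {r : ℕ} (hrad : HasRadius r f)
    {a b : ℤ} (hab : a ≤ b) :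
    ∑ w : ↥(Finset.Icc a b) → A, pcount f r a b (extW _ w)
      = Fintype.card A ^ ((b - a + 1).toNat + 2 * r) := by
  have : ∑ w : ↥(Finset.Icc a b) → A, pcount f r a b (extW _ w)
      = (Finset.univ : Finset (↥(Finset.Icc (a - r) (b + r)) → A)).card := by
    rw [Finset.card_eq_sum_card_fiberwise
      (f := fun u : ↥(Finset.Icc (a - r) (b + r)) → A =>
        (fun j : ↥(Finset.Icc a b) => f (extW _ u) j.1))
      (t := Finset.univ) (fun x _ => Finset.mem_univ _)]
    apply Finset.sum_congr rfl
    intro w _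
    rw [pcount_eq_card_fiber hrad]
  rw [this, Finset.card_univ, Fintype.card_fun, Fintype.card_coe, Int.card_Icc]
  congr 1
  omega
lemma pcount_extend_left {f : (ℤ → A) → (ℤ → A)} {r : ℕ} (hrad : HasRadius r f)
    {a b : ℤ} (hab : a ≤ b) (w : ℤ → A) :
    ∑ α : A, pcount f r (a - 1) b (Function.update w (a - 1) α)
      = Fintype.card A * pcount f r a b w := by
  classical
  set T' := Finset.Icc (a - 1 - (r : ℤ)) (b + r) with hT'
  have hsub : Finset.Icc (a - (r : ℤ)) (b + r) ⊆ T' := by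
    intro j hj; rw [Finset.mem_Icc] at *; omega
  have hlocw : LocalOn T' (fun x => ∀ j ∈ Finset.Icc a b, f x j = w j) :=
    (localOn_wordCond hrad a b w).mono hsub
  have h1 : Nat.card (liftSet T' (fun x => ∀ j ∈ Finset.Icc a b, f x j = w j))
      = Fintype.card A * pcount f r a b w := by
    rw [card_liftSet_subset hsub (localOn_wordCond hrad a b w)]
    have hc : T'.card - (Finset.Icc (a - (r : ℤ)) (b + r)).card = 1 := by
      rw [hT', Int.card_Icc, Int.card_Icc]; omega
    rw [hc, pow_one, mul_comm]
    rfl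
  have h2 : (Finset.univ.filter
        (· ∈ liftSet T' (fun x => ∀ j ∈ Finset.Icc a b, f x j = w j))).card
      = ∑ α : A, (Finset.univ.filter
          (fun u : ↥T' → A => u ∈ liftSet T' (fun x => ∀ j ∈ Finset.Icc a b, f x j = w j)
            ∧ f (extW T' u) (a - 1) = α)).card := by
    rw [Finset.card_eq_sum_card_fiberwise (f := fun u : ↥T' → A => f (extW T' u) (a - 1))
      (t := Finset.univ) (fun x _ => Finset.mem_univ _)]
    apply Finset.sum_congr rfl
    intro α _
    rw [Finset.filter_filter]
  have h3 : ∀ α : A, (Finset.univ.filter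
      (fun u : ↥T' → A => u ∈ liftSet T' (fun x => ∀ j ∈ Finset.Icc a b, f x j = w j)
        ∧ f (extW T' u) (a - 1) = α)).card
      = pcount f r (a - 1) b (Function.update w (a - 1) α) := by
    intro α
    rw [pcount, natCard_set_eq_card_filter]
    congr 1
    apply Finset.filter_congr
    intro u _
    constructor
    · rintro ⟨hw, hα⟩
      have hw' := (mem_liftSet_iff (le_refl T') hlocw).mp hw
      refine (mem_liftSet_iff (le_refl (Finset.Icc (a - 1 - (r : ℤ)) (b + r)))
          (localOn_wordCond hrad (a - 1) b (Function.update w (a - 1) α))).mpr ?_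
      intro j hj
      rw [Finset.mem_Icc] at hj
      by_cases hja : j = a - 1
      · subst hja
        rw [Function.update_self]
        exact hα
      · rw [Function.update_of_ne hja]
        exact hw' j (by rw [Finset.mem_Icc]; omega)
    · intro hmem
      have h := (mem_liftSet_iff (le_refl (Finset.Icc (a - 1 - (r : ℤ)) (b + r)))
          (localOn_wordCond hrad (a - 1) b (Function.update w (a - 1) α))).mp hmem
      constructor
      · refine (mem_liftSet_iff (le_refl T') hlocw).mpr ?_
        intro j hj
        rw [Finset.mem_Icc] at hj
        have := h j (by rw [Finset.mem_Icc]; omega)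
        rwa [Function.update_of_ne (by omega : j ≠ a - 1)] at this
      · have := h (a - 1) (by rw [Finset.mem_Icc]; omega)
        rwa [Function.update_self] at this
  calc ∑ α : A, pcount f r (a - 1) b (Function.update w (a - 1) α)
      = ∑ α : A, (Finset.univ.filter
          (fun u : ↥T' → A => u ∈ liftSet T' (fun x => ∀ j ∈ Finset.Icc a b, f x j = w j)
            ∧ f (extW T' u) (a - 1) = α)).card := by
        apply Finset.sum_congr rfl; intro α _; rw [h3]
    _ = (Finset.univ.filter
        (· ∈ liftSet T' (fun x => ∀ j ∈ Finset.Icc a b, f x j = w j))).card := h2.symm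
    _ = Nat.card (liftSet T' (fun x => ∀ j ∈ Finset.Icc a b, f x j = w j)) :=
        (natCard_set_eq_card_filter _).symm
    _ = Fintype.card A * pcount f r a b w := h1

lemma pcount_extend_right {f : (ℤ → A) → (ℤ → A)} {r : ℕ} (hrad : HasRadius r f)
    {a b : ℤ} (hab : a ≤ b) (w : ℤ → A) :
    ∑ α : A, pcount f r a (b + 1) (Function.update w (b + 1) α)
      = Fintype.card A * pcount f r a b w := by
  classical
  set T' := Finset.Icc (a - (r : ℤ)) (b + 1 + r) with hT'
  have hsub : Finset.Icc (a - (r : ℤ)) (b + r) ⊆ T' := by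
    intro j hj; rw [Finset.mem_Icc] at *; omega
  have hlocw : LocalOn T' (fun x => ∀ j ∈ Finset.Icc a b, f x j = w j) :=
    (localOn_wordCond hrad a b w).mono hsub
  have h1 : Nat.card (liftSet T' (fun x => ∀ j ∈ Finset.Icc a b, f x j = w j))
      = Fintype.card A * pcount f r a b w := by
    rw [card_liftSet_subset hsub (localOn_wordCond hrad a b w)]
    have hc : T'.card - (Finset.Icc (a - (r : ℤ)) (b + r)).card = 1 := by
      rw [hT', Int.card_Icc, Int.card_Icc]; omega
    rw [hc, pow_one, mul_comm]
    rfl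
  have h2 : (Finset.univ.filter
        (· ∈ liftSet T' (fun x => ∀ j ∈ Finset.Icc a b, f x j = w j))).card
      = ∑ α : A, (Finset.univ.filter
          (fun u : ↥T' → A => u ∈ liftSet T' (fun x => ∀ j ∈ Finset.Icc a b, f x j = w j)
            ∧ f (extW T' u) (b + 1) = α)).card := by
    rw [Finset.card_eq_sum_card_fiberwise (f := fun u : ↥T' → A => f (extW T' u) (b + 1))
      (t := Finset.univ) (fun x _ => Finset.mem_univ _)]
    apply Finset.sum_congr rfl
    intro α _
    rw [Finset.filter_filter]
  have h3 : ∀ α : A, (Finset.univ.filter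
      (fun u : ↥T' → A => u ∈ liftSet T' (fun x => ∀ j ∈ Finset.Icc a b, f x j = w j)
        ∧ f (extW T' u) (b + 1) = α)).card
      = pcount f r a (b + 1) (Function.update w (b + 1) α) := by
    intro α
    rw [pcount, natCard_set_eq_card_filter]
    congr 1
    apply Finset.filter_congr
    intro u _
    constructor
    · rintro ⟨hw, hα⟩
      have hw' := (mem_liftSet_iff (le_refl T') hlocw).mp hw
      refine (mem_liftSet_iff (le_refl (Finset.Icc (a - (r : ℤ)) (b + 1 + r)))
          (localOn_wordCond hrad a (b + 1) (Function.update w (b + 1) α))).mpr ?_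
      intro j hj
      rw [Finset.mem_Icc] at hj
      by_cases hjb : j = b + 1
      · subst hjb
        rw [Function.update_self]
        exact hα
      · rw [Function.update_of_ne hjb]
        exact hw' j (by rw [Finset.mem_Icc]; omega)
    · intro hmem
      have h := (mem_liftSet_iff (le_refl (Finset.Icc (a - (r : ℤ)) (b + 1 + r)))
          (localOn_wordCond hrad a (b + 1) (Function.update w (b + 1) α))).mp hmem
      constructor
      · refine (mem_liftSet_iff (le_refl T') hlocw).mpr ?_
        intro j hj
        rw [Finset.mem_Icc] at hj
        have := h j (by rw [Finset.mem_Icc]; omega)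
        rwa [Function.update_of_ne (by omega : j ≠ b + 1)] at this
      · have := h (b + 1) (by rw [Finset.mem_Icc]; omega)
        rwa [Function.update_self] at this
  calc ∑ α : A, pcount f r a (b + 1) (Function.update w (b + 1) α)
      = ∑ α : A, (Finset.univ.filter
          (fun u : ↥T' → A => u ∈ liftSet T' (fun x => ∀ j ∈ Finset.Icc a b, f x j = w j)
            ∧ f (extW T' u) (b + 1) = α)).card := by
        apply Finset.sum_congr rfl; intro α _; rw [h3]
    _ = (Finset.univ.filter
        (· ∈ liftSet T' (fun x => ∀ j ∈ Finset.Icc a b, f x j = w j))).card := h2.symm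
    _ = Nat.card (liftSet T' (fun x => ∀ j ∈ Finset.Icc a b, f x j = w j)) :=
        (natCard_set_eq_card_filter _).symm
    _ = Fintype.card A * pcount f r a b w := h1

lemma pcount_translate {f : (ℤ → A) → (ℤ → A)} {r : ℕ} (hrad : HasRadius r f)
    (i a b : ℤ) (w : ℤ → A) :
    pcount f r (a + i) (b + i) w = pcount f r a b (fun j => w (j + i)) := by
  unfold pcount
  have h1 : Finset.Icc (a + i - (r : ℤ)) (b + i + r) = Finset.Icc ((a - r) + i) ((b + r) + i) := by
    congr 1 <;> ring
  rw [h1, card_liftSet_translate]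
  have key : ∀ x : ℤ → A, ∀ j : ℤ, f (fun j' => x (j' - i)) (j + i) = f x j := by
    intro x j
    have e : (fun j' => x (j' - i)) = fun j' => x (-i + j') := by
      funext j'; congr 1; ring
    rw [e, hrad.shift_apply]
    congr 1; ring
  have hset : liftSet (Finset.Icc (a - (r : ℤ)) (b + r))
        (fun x => ∀ j ∈ Finset.Icc (a + i) (b + i), f (fun j' => x (j' - i)) j = w j)
      = liftSet (Finset.Icc (a - (r : ℤ)) (b + r))
        (fun x => ∀ j ∈ Finset.Icc a b, f x j = (fun j => w (j + i)) j) := by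
    apply liftSet_congr
    intro x
    constructor
    · intro h j hj
      have := h (j + i) (by rw [Finset.mem_Icc] at *; omega)
      rwa [key x j] at this
    · intro h j hj
      have hj' : j - i ∈ Finset.Icc a b := by rw [Finset.mem_Icc] at *; omega
      have k := key x (j - i)
      have e2 : j - i + i = j := by ring
      rw [e2] at k
      rw [k]
      have hx := h (j - i) hj'
      rw [hx]
      show w (j - i + i) = w j
      rw [e2]
  rw [hset]

lemma one_le_pcount {f : (ℤ → A) → (ℤ → A)} {r : ℕ}
    (hsurj : Function.Surjective f) (a b : ℤ) (w : ℤ → A) :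
    1 ≤ pcount f r a b w := by
  obtain ⟨x, hx⟩ := hsurj w
  have hmem : (fun j : ↥(Finset.Icc (a - (r : ℤ)) (b + r)) => x j.1)
      ∈ liftSet (Finset.Icc (a - (r : ℤ)) (b + r))
        (fun y => ∀ j ∈ Finset.Icc a b, f y j = w j) :=
    ⟨x, fun j => rfl, by intro j hj; rw [hx]⟩
  haveI : Nonempty (liftSet (Finset.Icc (a - (r : ℤ)) (b + r))
      (fun y => ∀ j ∈ Finset.Icc a b, f y j = w j)) := ⟨⟨_, hmem⟩⟩
  exact Nat.card_pos

lemma pcount_le {f : (ℤ → A) → (ℤ → A)} {r s : ℕ} (hrad : HasRadius r f)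
    (hinj : Function.Injective f) (hs : HasRadius s (Function.invFun f))
    {a b : ℤ} (hab : a + 2 * (s : ℤ) ≤ b) (w : ℤ → A) :
    pcount f r a b w ≤ Fintype.card A ^ (2 * (r + s)) := by
  classical
  set T := Finset.Icc (a - (r : ℤ)) (b + r) with hT
  set inner := Finset.Icc (a + (s : ℤ)) (b - s) with hinner
  have hin : inner ⊆ T := by
    intro j hj; rw [hinner, hT, Finset.mem_Icc] at *; omega
  have hInj : Function.Injective
      (fun u : ↥(liftSet T (fun x => ∀ j ∈ Finset.Icc a b, f x j = w j)) =>
        (fun j : ↥(T \ inner) => u.1 ⟨j.1, (Finset.mem_sdiff.mp j.2).1⟩)) := by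
    intro u1 u2 h
    apply Subtype.ext
    funext j
    by_cases hj : j.1 ∈ inner
    · -- determined by w via the inverse local rule
      have hP1 : ∀ j' ∈ Finset.Icc a b, f (extW T u1.1) j' = w j' :=
        (mem_liftSet_iff (le_refl T) (localOn_wordCond hrad a b w)).mp u1.2
      have hP2 : ∀ j' ∈ Finset.Icc a b, f (extW T u2.1) j' = w j' :=
        (mem_liftSet_iff (le_refl T) (localOn_wordCond hrad a b w)).mp u2.2
      have e1 : u1.1 j = Function.invFun f (f (extW T u1.1)) j.1 := by
        rw [Function.leftInverse_invFun hinj (extW T u1.1)]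
        exact (extW_mem u1.1 j).symm
      have e2 : u2.1 j = Function.invFun f (f (extW T u2.1)) j.1 := by
        rw [Function.leftInverse_invFun hinj (extW T u2.1)]
        exact (extW_mem u2.1 j).symm
      rw [e1, e2]
      apply hs.local_eq
      intro j' hj'
      rw [Finset.mem_Icc] at hj'
      rw [hinner, Finset.mem_Icc] at hj
      have hj'' : j' ∈ Finset.Icc a b := by rw [Finset.mem_Icc]; omega
      rw [hP1 j' hj'', hP2 j' hj'']
    · have := congrFun h ⟨j.1, Finset.mem_sdiff.mpr ⟨j.2, hj⟩⟩
      simpa using this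
  have := Nat.card_le_card_of_injective _ hInj
  apply this.trans
  rw [Nat.card_eq_fintype_card, Fintype.card_fun, Fintype.card_coe,
    Finset.card_sdiff_of_subset hin]
  apply Nat.pow_le_pow_right (Fintype.card_pos)
  rw [hT, hinner, Int.card_Icc, Int.card_Icc]
  omega
/-- minimal number of preimage words over words of length `L+1` -/
noncomputable def mmin (f : (ℤ → A) → (ℤ → A)) (r : ℕ) (L : ℕ) : ℕ :=
  sInf (Set.range (fun w : ↥(Finset.Icc (0 : ℤ) (L : ℤ)) → A =>
    pcount f r 0 (L : ℤ) (extW _ w)))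

lemma mmin_le {f : (ℤ → A) → (ℤ → A)} {r : ℕ} {L : ℕ}
    (w : ↥(Finset.Icc (0 : ℤ) (L : ℤ)) → A) :
    mmin f r L ≤ pcount f r 0 (L : ℤ) (extW _ w) :=
  Nat.sInf_le ⟨w, rfl⟩

lemma exists_mmin {f : (ℤ → A) → (ℤ → A)} {r : ℕ} (L : ℕ) :
    ∃ w : ↥(Finset.Icc (0 : ℤ) (L : ℤ)) → A,
      pcount f r 0 (L : ℤ) (extW _ w) = mmin f r L :=
  Nat.sInf_mem (Set.range_nonempty _)

lemma pcount_restrict {f : (ℤ → A) → (ℤ → A)} {r : ℕ} (a b : ℤ) (w : ℤ → A) :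
    pcount f r a b w
      = pcount f r a b (extW (Finset.Icc a b) (fun j => w j.1)) := by
  apply pcount_congr
  intro j hj
  rw [extW_mem (fun j : ↥(Finset.Icc a b) => w j.1) ⟨j, hj⟩]

lemma pcount_ge_mmin {f : (ℤ → A) → (ℤ → A)} {r : ℕ} (hrad : HasRadius r f)
    {a b : ℤ} (hab : a ≤ b) (w : ℤ → A) :
    mmin f r ((b - a).toNat) ≤ pcount f r a b w := by
  have h1 := pcount_translate hrad a 0 (((b - a).toNat : ℕ) : ℤ) w
  rw [show (0 : ℤ) + a = a by ring, show (((b - a).toNat : ℕ) : ℤ) + a = b by omega] at h1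
  rw [h1, pcount_restrict]
  exact mmin_le _

lemma mmin_antitone {f : (ℤ → A) → (ℤ → A)} {r : ℕ} (hrad : HasRadius r f) :
    Antitone (mmin f r) := by
  apply antitone_nat_of_succ_le
  intro L
  obtain ⟨w, hw⟩ := exists_mmin (f := f) (r := r) L
  have hsum := pcount_extend_right hrad (by exact_mod_cast Nat.zero_le L : (0:ℤ) ≤ L)
    (extW _ w)
  rw [hw] at hsum
  have hq : 1 ≤ Fintype.card A := Fintype.card_pos
  by_contra hcon
  push_neg at hcon
  have hall : ∀ α : A, mmin f r L + 1 ≤ pcount f r 0 ((L : ℤ) + 1)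
      (Function.update (extW _ w) ((L : ℤ) + 1) α) := by
    intro α
    have := pcount_ge_mmin hrad (by omega : (0:ℤ) ≤ (L : ℤ) + 1)
      (Function.update (extW _ w) ((L : ℤ) + 1) α)
    have he : ((L : ℤ) + 1 - 0).toNat = L + 1 := by omega
    rw [he] at this
    omega
  have : Fintype.card A * (mmin f r L + 1) ≤ Fintype.card A * mmin f r L := by
    calc Fintype.card A * (mmin f r L + 1)
        = ∑ _α : A, (mmin f r L + 1) := by rw [Finset.sum_const, Finset.card_univ, smul_eq_mul]
      _ ≤ ∑ α : A, pcount f r 0 ((L : ℤ) + 1)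
            (Function.update (extW _ w) ((L : ℤ) + 1) α) :=
          Finset.sum_le_sum (fun α _ => hall α)
      _ = Fintype.card A * mmin f r L := hsum
  nlinarith
theorem pcount_balance (hA : 2 ≤ Fintype.card A) {f : (ℤ → A) → (ℤ → A)} {r s : ℕ}
    (hrad : HasRadius r f) (hbij : Function.Bijective f)
    (hs : HasRadius s (Function.invFun f)) :
    ∃ L0 : ℕ, ∀ a b : ℤ, a ≤ b → (L0 : ℤ) ≤ b - a → ∀ w : ℤ → A,
      pcount f r a b w = Fintype.card A ^ (2 * r) := by
  classical
  set q := Fintype.card A with hqdef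
  -- stabilization of the minimum
  obtain ⟨L0, hL0⟩ : ∃ L0, mmin f r L0 = sInf (Set.range (mmin f r)) :=
    Nat.sInf_mem (Set.range_nonempty _)
  set μ0 := sInf (Set.range (mmin f r)) with hμ0def
  have hstab : ∀ L, L0 ≤ L → mmin f r L = μ0 := by
    intro L hL
    exact le_antisymm (hL0 ▸ mmin_antitone hrad hL) (Nat.sInf_le ⟨L, rfl⟩)
  have hq1 : 1 ≤ q := by omega
  -- one-step propagation to the left
  have hstepL : ∀ a b : ℤ, a ≤ b → (L0 : ℤ) ≤ b - a → ∀ w, pcount f r a b w = μ0 →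
      pcount f r (a - 1) b w = μ0 := by
    intro a b hab hL w h
    have hsum := pcount_extend_left hrad hab w
    rw [h] at hsum
    have hall : ∀ α ∈ (Finset.univ : Finset A),
        μ0 ≤ pcount f r (a - 1) b (Function.update w (a - 1) α) := by
      intro α _
      have h2 := pcount_ge_mmin hrad (by omega : a - 1 ≤ b) (Function.update w (a - 1) α)
      rwa [hstab _ (by omega)] at h2
    have hrig := sum_rigid hall (by rw [hsum, Finset.card_univ])
    have hupd := hrig (w (a - 1)) (Finset.mem_univ _)
    rwa [Function.update_eq_self] at hupd
  have hstepR : ∀ a b : ℤ, a ≤ b → (L0 : ℤ) ≤ b - a → ∀ w, pcount f r a b w = μ0 →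
      pcount f r a (b + 1) w = μ0 := by
    intro a b hab hL w h
    have hsum := pcount_extend_right hrad hab w
    rw [h] at hsum
    have hall : ∀ α ∈ (Finset.univ : Finset A),
        μ0 ≤ pcount f r a (b + 1) (Function.update w (b + 1) α) := by
      intro α _
      have h2 := pcount_ge_mmin hrad (by omega : a ≤ b + 1) (Function.update w (b + 1) α)
      rwa [hstab _ (by omega)] at h2
    have hrig := sum_rigid hall (by rw [hsum, Finset.card_univ])
    have hupd := hrig (w (b + 1)) (Finset.mem_univ _)
    rwa [Function.update_eq_self] at hupd
  -- full propagation
  have hprop : ∀ a b : ℤ, a ≤ b → (L0 : ℤ) ≤ b - a → ∀ w, pcount f r a b w = μ0 →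
      ∀ a' b' : ℤ, a' ≤ a → b ≤ b' → pcount f r a' b' w = μ0 := by
    intro a b hab hL w h a' b' ha' hb'
    have hleft : ∀ k : ℕ, pcount f r (a - k) b w = μ0 := by
      intro k
      induction k with
      | zero => simpa using h
      | succ k ih =>
        have h2 := hstepL (a - k) b (by omega) (by omega) w ih
        rw [show a - (((k : ℕ) + 1 : ℕ) : ℤ) = (a - ((k : ℕ) : ℤ)) - 1 by omega]
        exact h2
    have base := hleft ((a - a').toNat)
    rw [show a - (((a - a').toNat : ℕ) : ℤ) = a' by omega] at base
    have hright : ∀ l : ℕ, pcount f r a' (b + l) w = μ0 := by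
      intro l
      induction l with
      | zero => simpa using base
      | succ l ih =>
        have h2 := hstepR a' (b + l) (by omega) (by omega) w ih
        rw [show b + (((l : ℕ) + 1 : ℕ) : ℤ) = (b + ((l : ℕ) : ℤ)) + 1 by omega]
        exact h2
    have hfin := hright ((b' - b).toNat)
    rwa [show b + (((b' - b).toNat : ℕ) : ℤ) = b' by omega] at hfin
  -- μ0 ≤ q ^ (2r)
  have hcardwords : ∀ L : ℕ,
      Fintype.card (↥(Finset.Icc (0 : ℤ) (L : ℤ)) → A) = q ^ (L + 1) := by
    intro L
    rw [Fintype.card_fun, Fintype.card_coe, Int.card_Icc,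
      show ((L : ℤ) + 1 - 0).toNat = L + 1 by omega]
  have hμle : μ0 ≤ q ^ (2 * r) := by
    have hsum := sum_pcount hrad (by exact_mod_cast Nat.zero_le L0 : (0 : ℤ) ≤ (L0 : ℤ))
    have hlow : q ^ (L0 + 1) * μ0 ≤ q ^ ((L0 + 1) + 2 * r) := by
      calc q ^ (L0 + 1) * μ0
          = (Finset.univ : Finset (↥(Finset.Icc (0 : ℤ) (L0 : ℤ)) → A)).card • μ0 := by
            rw [Finset.card_univ, hcardwords, smul_eq_mul]
        _ ≤ ∑ w : ↥(Finset.Icc (0 : ℤ) (L0 : ℤ)) → A, pcount f r 0 (L0 : ℤ) (extW _ w) := by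
            apply Finset.card_nsmul_le_sum
            intro w _
            rw [← hL0]
            exact mmin_le w
        _ = q ^ (((L0 : ℤ) - 0 + 1).toNat + 2 * r) := hsum
        _ = q ^ ((L0 + 1) + 2 * r) := by
            have he : ((L0 : ℤ) - 0 + 1).toNat = L0 + 1 := by omega
            rw [he]
    have h2 : q ^ (L0 + 1) * μ0 ≤ q ^ (L0 + 1) * q ^ (2 * r) := by
      rw [← pow_add]; exact hlow
    exact Nat.le_of_mul_le_mul_left h2 (by positivity)
  -- q ^ (2r) ≤ μ0 : the hard direction
  have hμge : q ^ (2 * r) ≤ μ0 := by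
    obtain ⟨v, hv⟩ := exists_mmin (f := f) (r := r) L0
    rw [hL0] at hv
    set B := L0 + 1 with hB
    have hBpos : 0 < B := by omega
    -- choose k
    have hQ1 : 1 ≤ q ^ B := Nat.one_le_pow _ _ (by omega)
    have hQ2 : 2 ≤ q ^ B := le_trans hA (Nat.le_self_pow (by omega) q)
    have hQR : (0 : ℝ) < ((q ^ B : ℕ) : ℝ) := by positivity
    have hrat_nonneg : (0 : ℝ) ≤ ((q ^ B - 1 : ℕ) : ℝ) / ((q ^ B : ℕ) : ℝ) := by positivity
    have hrat_lt : ((q ^ B - 1 : ℕ) : ℝ) / ((q ^ B : ℕ) : ℝ) < 1 := by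
      rw [div_lt_one hQR]
      exact_mod_cast Nat.sub_lt (by omega) one_pos
    have hCpos : (0 : ℝ) < (((q : ℝ)) ^ (2 * (r + s)))⁻¹ := by
      have : (0:ℝ) < (q:ℝ) := by positivity
      positivity
    obtain ⟨k0, hk0⟩ := exists_pow_lt_of_lt_one hCpos hrat_lt
    set k := k0 + 2 * s + 1 with hk
    have hkey : (q ^ B - 1) ^ k * q ^ (2 * (r + s)) < q ^ (B * k) := by
      have h1 : (((q ^ B - 1 : ℕ) : ℝ) / ((q ^ B : ℕ) : ℝ)) ^ k < (((q : ℝ)) ^ (2 * (r + s)))⁻¹ :=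
        lt_of_le_of_lt (pow_le_pow_of_le_one hrat_nonneg (le_of_lt hrat_lt) (by omega)) hk0
      rw [div_pow, div_lt_iff₀ (by positivity)] at h1
      have h2 : ((q ^ B - 1 : ℕ) : ℝ) ^ k * ((q : ℝ)) ^ (2 * (r + s))
          < (((q ^ B : ℕ) : ℝ)) ^ k := by
        have hC1 : (0:ℝ) < ((q:ℝ)) ^ (2 * (r + s)) := by
          have : (0:ℝ) < (q:ℝ) := by positivity
          positivity
        calc ((q ^ B - 1 : ℕ) : ℝ) ^ k * ((q : ℝ)) ^ (2 * (r + s))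
            < ((((q : ℝ)) ^ (2 * (r + s)))⁻¹ * ((q ^ B : ℕ) : ℝ) ^ k) * ((q : ℝ)) ^ (2 * (r + s)) := by
              apply mul_lt_mul_of_pos_right h1 hC1
          _ = (((q ^ B : ℕ) : ℝ)) ^ k := by field_simp
      have h3 : ((q ^ B - 1) ^ k * q ^ (2 * (r + s)) : ℕ) < ((q ^ B) ^ k : ℕ) := by
        exact_mod_cast h2
      rwa [← pow_mul] at h3
    set N := B * k with hN
    have hk1 : 1 ≤ k := by omega
    have hNk : k ≤ N := by
      rw [hN]
      exact Nat.le_mul_of_pos_left k hBpos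
    have hN1 : 1 ≤ N := le_trans hk1 hNk
    set b1 : ℤ := (N : ℤ) - 1 with hb1
    have hab1 : (0 : ℤ) ≤ b1 := by omega
    have hsumN := sum_pcount hrad hab1
    have hexpN : ((b1 - 0 + 1).toNat + 2 * r) = N + 2 * r := by omega
    rw [hexpN] at hsumN
    set V : ℤ → A := extW (Finset.Icc (0 : ℤ) (L0 : ℤ)) v with hV
    set matched : (↥(Finset.Icc (0 : ℤ) b1) → A) → Prop := fun w =>
      ∃ t : ℕ, t < k ∧ ∀ j ∈ Finset.Icc ((t * B : ℕ) : ℤ) ((t * B + L0 : ℕ) : ℤ),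
        extW _ w j = V (j - (t * B : ℕ)) with hmatched
    -- matched words have pcount μ0
    have hmatched_val : ∀ w, matched w → pcount f r 0 b1 (extW _ w) = μ0 := by
      rintro w ⟨t, htk, hblock⟩
      obtain ⟨p, hp⟩ : ∃ p, t * B = p := ⟨_, rfl⟩
      rw [hp] at hblock
      have hmul : p + B ≤ N := by
        rw [← hp, hN]
        calc t * B + B = (t + 1) * B := by ring
          _ ≤ k * B := Nat.mul_le_mul_right B (by omega)
          _ = B * k := by ring
      have htrans := pcount_translate hrad ((p : ℕ) : ℤ) 0 (L0 : ℤ) (extW _ w)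
      rw [show (0 : ℤ) + ((p : ℕ) : ℤ) = ((p : ℕ) : ℤ) by ring,
          show (L0 : ℤ) + ((p : ℕ) : ℤ) = ((p + L0 : ℕ) : ℤ) by push_cast; ring] at htrans
      have hcong : pcount f r 0 (L0 : ℤ) (fun j => extW _ w (j + ((p : ℕ) : ℤ)))
          = pcount f r 0 (L0 : ℤ) V := by
        apply pcount_congr
        intro j hj
        rw [Finset.mem_Icc] at hj
        have hb := hblock (j + ((p : ℕ) : ℤ)) (by rw [Finset.mem_Icc]; omega)
        rw [hb]
        congr 1
        ring
      have hblockval : pcount f r ((p : ℕ) : ℤ) ((p + L0 : ℕ) : ℤ) (extW _ w) = μ0 := by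
        rw [htrans, hcong]
        exact hv
      exact hprop ((p : ℕ) : ℤ) ((p + L0 : ℕ) : ℤ) (by omega)
        (by omega) (extW _ w) hblockval 0 b1 (by positivity)
        (by omega)
    -- counting the unmatched words
    have hBlkSub : ∀ t : Fin k, ∀ j : ℤ,
        j ∈ Finset.Icc ((t.1 * B : ℕ) : ℤ) ((t.1 * B + L0 : ℕ) : ℤ) →
        j ∈ Finset.Icc (0 : ℤ) b1 := by
      intro t j hj
      obtain ⟨p, hp⟩ : ∃ p, t.1 * B = p := ⟨_, rfl⟩
      rw [hp] at hj
      have hmul : p + B ≤ N := by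
        rw [← hp, hN]
        calc t.1 * B + B = (t.1 + 1) * B := by ring
          _ ≤ k * B := Nat.mul_le_mul_right B t.2
          _ = B * k := by ring
      rw [Finset.mem_Icc] at *
      omega
    have hunm : (Finset.univ.filter (fun w : ↥(Finset.Icc (0 : ℤ) b1) → A => ¬ matched w)).card
        ≤ (q ^ B - 1) ^ k := by
      set vb : ∀ t : Fin k, ↥(Finset.Icc ((t.1 * B : ℕ) : ℤ) ((t.1 * B + L0 : ℕ) : ℤ)) → A :=
        fun t j => V (j.1 - (t.1 * B : ℕ)) with hvb
      let Ψ : {w : ↥(Finset.Icc (0 : ℤ) b1) → A // ¬ matched w} →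
          (∀ t : Fin k,
            {z : ↥(Finset.Icc ((t.1 * B : ℕ) : ℤ) ((t.1 * B + L0 : ℕ) : ℤ)) → A // z ≠ vb t}) :=
        fun w t => ⟨fun j => w.1 ⟨j.1, hBlkSub t j.1 j.2⟩, by
          intro heq
          apply w.2
          refine ⟨t.1, t.2, fun j hj => ?_⟩
          have h1 : extW _ w.1 j = w.1 ⟨j, hBlkSub t j hj⟩ :=
            extW_mem w.1 ⟨j, hBlkSub t j hj⟩
          rw [h1]
          exact congrFun heq ⟨j, hj⟩⟩
      have hinj : Function.Injective Ψ := by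
        intro w1 w2 h
        apply Subtype.ext
        funext j
        have hj := j.2
        rw [Finset.mem_Icc] at hj
        set jn := j.1.toNat with hjn
        have hjval : (jn : ℤ) = j.1 := by omega
        obtain ⟨t, p, htp, hple, hplt, htk⟩ :
            ∃ t p : ℕ, t * B = p ∧ p ≤ jn ∧ jn < p + B ∧ t < k := by
          refine ⟨jn / B, jn / B * B, rfl, Nat.div_mul_le_self jn B, ?_, ?_⟩
          · have hmod := Nat.mod_lt jn hBpos
            calc jn = B * (jn / B) + jn % B := (Nat.div_add_mod jn B).symm
              _ < B * (jn / B) + B := Nat.add_lt_add_left hmod _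
              _ = jn / B * B + B := by ring
          · rw [Nat.div_lt_iff_lt_mul hBpos]
            have hjN : jn < N := by omega
            calc jn < N := hjN
              _ = k * B := by rw [hN]; ring
        have hmem : j.1 ∈ Finset.Icc (((⟨t, htk⟩ : Fin k).1 * B : ℕ) : ℤ)
            (((⟨t, htk⟩ : Fin k).1 * B + L0 : ℕ) : ℤ) := by
          rw [Finset.mem_Icc]
          simp only
          rw [htp]
          omega
        have h2 := congrFun (congrArg Subtype.val (congrFun h ⟨t, htk⟩)) ⟨j.1, hmem⟩
        simp only [Ψ] at h2
        have hjeq : (⟨j.1, hBlkSub ⟨t, htk⟩ j.1 hmem⟩ : ↥(Finset.Icc (0 : ℤ) b1)) = j :=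
          Subtype.ext rfl
        rw [hjeq] at h2
        exact h2
      have hcard1 : (Finset.univ.filter
            (fun w : ↥(Finset.Icc (0 : ℤ) b1) → A => ¬ matched w)).card
          = Nat.card {w : ↥(Finset.Icc (0 : ℤ) b1) → A // ¬ matched w} := by
        rw [Nat.card_eq_fintype_card, Fintype.card_subtype]
      rw [hcard1]
      have hle := Nat.card_le_card_of_injective Ψ hinj
      apply hle.trans
      rw [Nat.card_eq_fintype_card, Fintype.card_pi]
      have hfac : ∀ t : Fin k,
          Fintype.card {z : ↥(Finset.Icc ((t.1 * B : ℕ) : ℤ) ((t.1 * B + L0 : ℕ) : ℤ)) → A //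
            z ≠ vb t} = q ^ B - 1 := by
        intro t
        have hcompl : Fintype.card {z : ↥(Finset.Icc ((t.1 * B : ℕ) : ℤ) ((t.1 * B + L0 : ℕ) : ℤ)) → A //
            z ≠ vb t} = Fintype.card (↥(Finset.Icc ((t.1 * B : ℕ) : ℤ) ((t.1 * B + L0 : ℕ) : ℤ)) → A)
              - Fintype.card {z // z = vb t} :=
          Fintype.card_subtype_compl _
        rw [hcompl, Fintype.card_subtype_eq, Fintype.card_fun, Fintype.card_coe, Int.card_Icc]
        have he : ((t.1 * B + L0 : ℕ) : ℤ) + 1 - ((t.1 * B : ℕ) : ℤ) = (B : ℤ) := by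
          rw [hB]; push_cast; ring
        rw [he]
        simp [hqdef]
      have hprodeq : ∏ t : Fin k,
          Fintype.card {z : ↥(Finset.Icc ((t.1 * B : ℕ) : ℤ) ((t.1 * B + L0 : ℕ) : ℤ)) → A //
            z ≠ vb t} = (q ^ B - 1) ^ k := by
        rw [Finset.prod_congr rfl (fun t _ => hfac t), Finset.prod_const, Finset.card_univ,
          Fintype.card_fin]
      exact le_of_eq hprodeq
    -- sum split and conclusion
    have hsplit := Finset.sum_filter_add_sum_filter_not Finset.univ matched
      (fun w => pcount f r 0 b1 (extW _ w))
    have hwordsN : (Finset.univ : Finset (↥(Finset.Icc (0 : ℤ) b1) → A)).card = q ^ N := by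
      rw [Finset.card_univ, Fintype.card_fun, Fintype.card_coe, Int.card_Icc,
        show (b1 + 1 - 0).toNat = N by omega]
    have hmsum : ∑ w ∈ Finset.univ.filter matched, pcount f r 0 b1 (extW _ w)
        ≤ q ^ N * μ0 := by
      calc ∑ w ∈ Finset.univ.filter matched, pcount f r 0 b1 (extW _ w)
          = ∑ _w ∈ Finset.univ.filter matched, μ0 :=
            Finset.sum_congr rfl (fun w hw => hmatched_val w (Finset.mem_filter.mp hw).2)
        _ = (Finset.univ.filter matched).card * μ0 := by rw [Finset.sum_const, smul_eq_mul]
        _ ≤ q ^ N * μ0 := by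
            apply Nat.mul_le_mul_right
            rw [← hwordsN]
            exact Finset.card_filter_le _ _
    have husum : ∑ w ∈ Finset.univ.filter (fun w => ¬ matched w), pcount f r 0 b1 (extW _ w)
        ≤ (q ^ B - 1) ^ k * q ^ (2 * (r + s)) := by
      calc ∑ w ∈ Finset.univ.filter (fun w => ¬ matched w), pcount f r 0 b1 (extW _ w)
          ≤ ∑ _w ∈ Finset.univ.filter (fun w => ¬ matched w), q ^ (2 * (r + s)) := by
            apply Finset.sum_le_sum
            intro w _
            exact pcount_le hrad hbij.injective hs (by omega) _
        _ = (Finset.univ.filter (fun w => ¬ matched w)).card * q ^ (2 * (r + s)) := by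
            rw [Finset.sum_const, smul_eq_mul]
        _ ≤ (q ^ B - 1) ^ k * q ^ (2 * (r + s)) := Nat.mul_le_mul_right _ hunm
    have htotal : q ^ (N + 2 * r) ≤ q ^ N * μ0 + (q ^ B - 1) ^ k * q ^ (2 * (r + s)) := by
      rw [← hsumN, ← hsplit]
      exact Nat.add_le_add hmsum husum
    have hlt : q ^ N * q ^ (2 * r) < q ^ N * (μ0 + 1) := by
      calc q ^ N * q ^ (2 * r) = q ^ (N + 2 * r) := by rw [pow_add]
        _ ≤ q ^ N * μ0 + (q ^ B - 1) ^ k * q ^ (2 * (r + s)) := htotal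
        _ < q ^ N * μ0 + q ^ N := by omega
        _ = q ^ N * (μ0 + 1) := by ring
    have hfin := Nat.lt_of_mul_lt_mul_left hlt
    omega
  -- conclusion
  have hμval : μ0 = q ^ (2 * r) := le_antisymm hμle hμge
  refine ⟨L0, ?_⟩
  intro a b hab hL w
  set L := (b - a).toNat with hLdef
  have hLL0 : L0 ≤ L := by omega
  have hall : ∀ w' : ↥(Finset.Icc (0 : ℤ) (L : ℤ)) → A,
      pcount f r 0 (L : ℤ) (extW _ w') = μ0 := by
    have hsum := sum_pcount hrad (by exact_mod_cast Nat.zero_le L : (0 : ℤ) ≤ (L : ℤ))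
    have hge : ∀ w' ∈ (Finset.univ : Finset (↥(Finset.Icc (0 : ℤ) (L : ℤ)) → A)),
        μ0 ≤ pcount f r 0 (L : ℤ) (extW _ w') := by
      intro w' _
      rw [← hstab L hLL0]
      exact mmin_le w'
    have hrig := sum_rigid hge (by
      rw [hsum, Finset.card_univ, hcardwords, hμval, ← pow_add,
        show ((L : ℤ) - 0 + 1).toNat + 2 * r = L + 1 + 2 * r by omega])
    exact fun w' => hrig w' (Finset.mem_univ _)
  have h1 := pcount_translate hrad a 0 ((L : ℕ) : ℤ) w
  rw [show (0 : ℤ) + a = a by ring, show ((L : ℕ) : ℤ) + a = b by omega] at h1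
  rw [h1, pcount_restrict, hall _]
  exact hμval
lemma HasRadius.shift_comm {f : (ℤ → A) → (ℤ → A)} {r : ℕ} (h : HasRadius r f)
    (x : ℤ → A) (i : ℤ) :
    f (fun j => x (i + j)) = fun k => f x (i + k) := by
  funext k
  exact h.shift_apply x i k

lemma invFun_shift_comm {f : (ℤ → A) → (ℤ → A)} {r : ℕ} (h : HasRadius r f)
    (hbij : Function.Bijective f) (x : ℤ → A) (i : ℤ) :
    Function.invFun f (fun j => x (i + j)) = fun k => Function.invFun f x (i + k) := by
  apply hbij.injective
  rw [Function.rightInverse_invFun hbij.surjective]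
  rw [h.shift_comm (Function.invFun f x) i]
  funext k
  rw [Function.rightInverse_invFun hbij.surjective]

lemma isCA_invFun {c : (ℤ → A) → (ℤ → A)} (hc : IsCA c) (hcb : Function.Bijective c) :
    IsCA (Function.invFun c) := by
  classical
  obtain ⟨r, hrad⟩ := hc
  letI : TopologicalSpace A := ⊥
  haveI : DiscreteTopology A := ⟨rfl⟩
  -- continuity of c
  have hcont : Continuous c := by
    apply continuous_pi
    intro i
    obtain ⟨F, hF, hFc⟩ := hrad
    have heq : (fun x : ℤ → A => c x i)
        = (fun u : ↥(Finset.Icc (-(r : ℤ)) (r : ℤ)) → A => F (extW _ u))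
          ∘ (fun x : ℤ → A => fun j : ↥(Finset.Icc (-(r : ℤ)) (r : ℤ)) => x (i + j.1)) := by
      funext x
      simp only [Function.comp]
      rw [hFc]
      apply hF
      intro j hj
      have hjm : j ∈ Finset.Icc (-(r : ℤ)) (r : ℤ) := by
        rw [Finset.mem_Icc]; rw [abs_le] at hj; exact hj
      rw [extW]
      simp [hjm]
    rw [heq]
    apply Continuous.comp
    · exact continuous_of_discreteTopology
    · exact continuous_pi (fun j => continuous_apply (i + j.1))
  -- the inverse is continuous
  have hicont : Continuous (Function.invFun c) := by
    let e : (ℤ → A) ≃ (ℤ → A) := Equiv.ofBijective c hcb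
    have he : Continuous ⇑e := hcont
    let h := he.homeoOfEquivCompactToT2
    have heq : Function.invFun c = ⇑h.symm := by
      funext x
      apply hcb.injective
      rw [Function.rightInverse_invFun hcb.surjective]
      show x = c (e.symm x)
      exact (e.apply_symm_apply x).symm
    rw [heq]
    exact h.symm.continuous
  -- extract a radius by compactness
  have h0 : Continuous (fun x : ℤ → A => Function.invFun c x 0) :=
    (continuous_apply 0).comp hicont
  obtain ⟨r', hr'⟩ : ∃ r' : ℕ, ∀ x y : ℤ → A, (∀ j : ℤ, |j| ≤ (r' : ℤ) → x j = y j) →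
      Function.invFun c x 0 = Function.invFun c y 0 := by
    set g : (ℤ → A) → A := fun x => Function.invFun c x 0 with hg
    have hopen : ∀ x : ℤ → A, IsOpen {y : ℤ → A | g y = g x} :=
      fun x => h0.isOpen_preimage {g x} (isOpen_discrete _)
    have hchoice : ∀ x : ℤ → A, ∃ I : Finset ℤ,
        {y : ℤ → A | ∀ j ∈ I, y j = x j} ⊆ {y | g y = g x} := by
      intro x
      obtain ⟨I, u, hIu, hsub⟩ := (isOpen_pi_iff.mp (hopen x)) x rfl
      refine ⟨I, fun y hy => hsub ?_⟩
      intro a ha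
      rw [hy a ha]
      exact (hIu a ha).2
    choose I hI using hchoice
    have hcover : (Set.univ : Set (ℤ → A)) ⊆
        ⋃ x : ℤ → A, {y : ℤ → A | ∀ j ∈ I x, y j = x j} := by
      intro y _
      exact Set.mem_iUnion.mpr ⟨y, fun j _ => rfl⟩
    have hopen2 : ∀ x : ℤ → A, IsOpen {y : ℤ → A | ∀ j ∈ I x, y j = x j} := by
      intro x
      have : {y : ℤ → A | ∀ j ∈ I x, y j = x j} = Set.pi (I x) (fun j => {x j}) := by
        ext y
        simp [Set.mem_pi]
      rw [this]
      exact isOpen_set_pi (I x).finite_toSet (fun j _ => isOpen_discrete _)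
    obtain ⟨S, hS⟩ := isCompact_univ.elim_finite_subcover _ hopen2 hcover
    refine ⟨(S.biUnion I).sup Int.natAbs, ?_⟩
    intro x y hxy
    obtain ⟨z, hzS, hz⟩ : ∃ z ∈ S, x ∈ {y : ℤ → A | ∀ j ∈ I z, y j = z j} := by
      have := hS (Set.mem_univ x)
      rw [Set.mem_iUnion₂] at this
      obtain ⟨z, hz1, hz2⟩ := this
      exact ⟨z, hz1, hz2⟩
    have hxz : g x = g z := hI z hz
    have hyz : g y = g z := by
      apply hI z
      intro j hj
      rw [← hz j hj]
      have hjr : |j| ≤ (((S.biUnion I).sup Int.natAbs : ℕ) : ℤ) := by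
        have hmem : j ∈ S.biUnion I := Finset.mem_biUnion.mpr ⟨z, hzS, hj⟩
        have hle := Finset.le_sup (f := Int.natAbs) hmem
        rw [Int.abs_eq_natAbs]
        exact_mod_cast hle
      exact (hxy j hjr).symm
    show g x = g y
    rw [hxz, hyz]
  refine ⟨r', fun x => Function.invFun c x 0, hr', ?_⟩
  intro x i
  show Function.invFun c x i = Function.invFun c (fun j => x (i + j)) 0
  rw [invFun_shift_comm hrad hcb x i]
  simp
end AuxProof

/-- inversion is continuous on reversible cellular automata:
if `r(d) > r(c)` and `r(d⁻¹) > r(c⁻¹)` then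
`δ(c⁻¹, d⁻¹) ≤ (2 r(c⁻¹) + 1) δ(c, d)`. -/
theorem stmt4 {A : Type} [Fintype A] [Nonempty A] (hA : 2 ≤ Fintype.card A)
    (c d : (ℤ → A) → (ℤ → A)) (hc : IsCA c) (hd : IsCA d)
    (hcb : Function.Bijective c) (hdb : Function.Bijective d)
    (hr : rad c < rad d)
    (hr' : rad (Function.invFun c) < rad (Function.invFun d)) :
    delta (Function.invFun c) (Function.invFun d) ≤
      (2 * (rad (Function.invFun c) : ℝ) + 1) * delta c d := by
  classical
  set q := Fintype.card A with hq
  set r0 := rad d with hr0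
  set rc' := rad (Function.invFun c) with hrc'
  set rd' := rad (Function.invFun d) with hrd'
  have hrad_c : HasRadius r0 c := hc.hasRadius_rad.mono hr.le
  have hrad_d : HasRadius r0 d := hd.hasRadius_rad
  have hradc' : HasRadius rc' (Function.invFun c) := (isCA_invFun hc hcb).hasRadius_rad
  have hradd' : HasRadius rd' (Function.invFun d) := (isCA_invFun hd hdb).hasRadius_rad
  -- balance radius
  obtain ⟨L0, hbal⟩ := pcount_balance hA hrad_d hdb hradd'
  set m : ℕ := rd' + rc' + r0 + L0 + 1 with hm
  set P : (ℤ → A) → Prop := fun x => Function.invFun c x 0 ≠ Function.invFun d x 0 with hP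
  -- locality of P
  have hlocP : ∀ n : ℕ, rd' ≤ n → LocalOn (Finset.Icc (-(n : ℤ)) (n : ℤ)) P := by
    intro n hn x y hxy hPx
    have h1 : Function.invFun c x 0 = Function.invFun c y 0 := by
      apply hradc'.local_eq
      intro j hj
      rw [Finset.mem_Icc] at hj
      exact hxy j (by rw [Finset.mem_Icc]; omega)
    have h2 : Function.invFun d x 0 = Function.invFun d y 0 := by
      apply hradd'.local_eq
      intro j hj
      rw [Finset.mem_Icc] at hj
      exact hxy j (by rw [Finset.mem_Icc]; omega)
    show Function.invFun c y 0 ≠ Function.invFun d y 0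
    rw [← h1, ← h2]
    exact hPx
  -- the two difference-set cardinalities
  set nB : ℕ := Nat.card (liftSet (Finset.Icc (-(m : ℤ)) (m : ℤ)) P) with hnB
  set nB' : ℕ := Nat.card (liftSet (Finset.Icc (-(rd' : ℤ)) (rd' : ℤ)) P) with hnB'
  set nD : ℕ := Nat.card (liftSet (Finset.Icc (-(r0 : ℤ)) (r0 : ℤ))
    (fun x => c x 0 ≠ d x 0)) with hnD
  -- relation between nB and nB'
  have hsub1 : Finset.Icc (-(rd' : ℤ)) (rd' : ℤ) ⊆ Finset.Icc (-(m : ℤ)) (m : ℤ) := by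
    intro j hj; rw [Finset.mem_Icc] at *; omega
  have hBB' : nB = nB' * q ^ (2 * (m - rd')) := by
    rw [hnB, hnB', card_liftSet_subset hsub1 (hlocP rd' le_rfl)]
    have he : (Finset.Icc (-(m : ℤ)) (m : ℤ)).card
        - (Finset.Icc (-(rd' : ℤ)) (rd' : ℤ)).card = 2 * (m - rd') := by
      rw [Int.card_Icc, Int.card_Icc]; omega
    rw [he, hq]
  -- count of preimage words via balance
  have hloc_dP : LocalOn (Finset.Icc (-(m : ℤ) - (r0 : ℤ)) ((m : ℤ) + (r0 : ℤ)))
      (fun x => P (d x)) := by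
    intro x y hxy hPx
    refine hlocP m (by omega) (d x) (d y) ?_ hPx
    intro j hj
    rw [Finset.mem_Icc] at hj
    apply hrad_d.local_eq
    intro j' hj'
    rw [Finset.mem_Icc] at hj'
    exact hxy j' (by rw [Finset.mem_Icc]; omega)
  -- the word-image map
  set Φ : (↥(Finset.Icc (-(m : ℤ) - (r0 : ℤ)) ((m : ℤ) + (r0 : ℤ))) → A) →
      (↥(Finset.Icc (-(m : ℤ)) (m : ℤ)) → A) :=
    fun u => fun j : ↥(Finset.Icc (-(m : ℤ)) (m : ℤ)) => d (extW _ u) j.1 with hΦ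
  -- membership characterization
  have hmemPreB : ∀ u, u ∈ liftSet (Finset.Icc (-(m : ℤ) - (r0 : ℤ)) ((m : ℤ) + (r0 : ℤ)))
      (fun x => P (d x)) ↔ Φ u ∈ liftSet (Finset.Icc (-(m : ℤ)) (m : ℤ)) P := by
    intro u
    rw [mem_liftSet_iff (le_refl _) hloc_dP]
    constructor
    · intro h
      exact ⟨d (extW _ u), fun j => rfl, h⟩
    · rintro ⟨x', hx', hPx'⟩
      refine hlocP m (by omega) x' (d (extW _ u)) ?_ hPx'
      intro j hj
      exact hx' ⟨j, hj⟩
  -- cardinality of the preimage set equals nB * q^(2 r0)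
  have hPreB : (Finset.univ.filter
        (· ∈ liftSet (Finset.Icc (-(m : ℤ) - (r0 : ℤ)) ((m : ℤ) + (r0 : ℤ)))
          (fun x => P (d x)))).card = nB * q ^ (2 * r0) := by
    have hf1 : Finset.univ.filter
        (· ∈ liftSet (Finset.Icc (-(m : ℤ) - (r0 : ℤ)) ((m : ℤ) + (r0 : ℤ)))
          (fun x => P (d x)))
        = Finset.univ.filter (fun u => Φ u ∈ liftSet (Finset.Icc (-(m : ℤ)) (m : ℤ)) P) := by
      apply Finset.filter_congr
      intro u _
      exact hmemPreB u
    rw [hf1]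
    rw [Finset.card_eq_sum_card_fiberwise (f := Φ)
      (t := Finset.univ.filter (· ∈ liftSet (Finset.Icc (-(m : ℤ)) (m : ℤ)) P))
      (fun u hu => by
        rw [Finset.mem_coe, Finset.mem_filter] at hu ⊢
        exact ⟨Finset.mem_univ _, hu.2⟩)]
    have hfib : ∀ w ∈ Finset.univ.filter (· ∈ liftSet (Finset.Icc (-(m : ℤ)) (m : ℤ)) P),
        ((Finset.univ.filter (fun u => Φ u ∈ liftSet (Finset.Icc (-(m : ℤ)) (m : ℤ)) P)).filter
          (fun u => Φ u = w)).card = q ^ (2 * r0) := by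
      intro w hw
      rw [Finset.mem_filter] at hw
      have hff : (Finset.univ.filter (fun u => Φ u ∈ liftSet (Finset.Icc (-(m : ℤ)) (m : ℤ)) P)).filter
          (fun u => Φ u = w)
          = Finset.univ.filter (fun u => (fun j : ↥(Finset.Icc (-(m : ℤ)) (m : ℤ)) =>
              d (extW _ u) j.1) = w) := by
        rw [Finset.filter_filter]
        apply Finset.filter_congr
        intro u _
        constructor
        · rintro ⟨_, h2⟩; exact h2
        · intro h2
          refine ⟨?_, h2⟩
          simp only [hΦ]
          rw [h2]
          exact hw.2
      rw [hff, ← pcount_eq_card_fiber hrad_d (-(m : ℤ)) (m : ℤ) w]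
      exact hbal (-(m : ℤ)) (m : ℤ) (by omega) (by omega) _
    rw [Finset.sum_congr rfl hfib, Finset.sum_const, smul_eq_mul]
    congr 1
    rw [hnB, natCard_set_eq_card_filter]
  -- covering by the difference cylinders
  have hcover : Finset.univ.filter
        (· ∈ liftSet (Finset.Icc (-(m : ℤ) - (r0 : ℤ)) ((m : ℤ) + (r0 : ℤ)))
          (fun x => P (d x)))
      ⊆ (Finset.Icc (-(rc' : ℤ)) (rc' : ℤ)).biUnion (fun i =>
          Finset.univ.filter
            (· ∈ liftSet (Finset.Icc (-(m : ℤ) - (r0 : ℤ)) ((m : ℤ) + (r0 : ℤ)))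
              (fun x => c x i ≠ d x i))) := by
    intro u hu
    rw [Finset.mem_filter] at hu
    have hPd : P (d (extW _ u)) := (mem_liftSet_iff (le_refl _) hloc_dP).mp hu.2
    set y := extW (Finset.Icc (-(m : ℤ) - (r0 : ℤ)) ((m : ℤ) + (r0 : ℤ))) u with hy
    have hinvd : Function.invFun d (d y) = y := Function.leftInverse_invFun hdb.injective y
    simp only [hP] at hPd
    have hne : Function.invFun c (d y) 0 ≠ Function.invFun c (c y) 0 := by
      rw [Function.leftInverse_invFun hcb.injective y]
      rw [hinvd] at hPd
      exact hPd
    have hex : ∃ i ∈ Finset.Icc (-(rc' : ℤ)) (rc' : ℤ), c y i ≠ d y i := by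
      by_contra hcon
      push_neg at hcon
      apply hne
      apply hradc'.local_eq
      intro j hj
      rw [Finset.mem_Icc] at hj
      exact (hcon j (by rw [Finset.mem_Icc]; omega)).symm
    obtain ⟨i, hi, hci⟩ := hex
    rw [Finset.mem_biUnion]
    refine ⟨i, hi, ?_⟩
    rw [Finset.mem_filter]
    exact ⟨Finset.mem_univ _, ⟨y, fun j => extW_mem u j, hci⟩⟩
  -- cardinality of each difference cylinder
  have hTi : ∀ i ∈ Finset.Icc (-(rc' : ℤ)) (rc' : ℤ),
      (Finset.univ.filter
        (· ∈ liftSet (Finset.Icc (-(m : ℤ) - (r0 : ℤ)) ((m : ℤ) + (r0 : ℤ)))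
          (fun x => c x i ≠ d x i))).card = nD * q ^ (2 * m) := by
    intro i hi
    rw [Finset.mem_Icc] at hi
    have hsub2 : Finset.Icc (i - (r0 : ℤ)) (i + (r0 : ℤ))
        ⊆ Finset.Icc (-(m : ℤ) - (r0 : ℤ)) ((m : ℤ) + (r0 : ℤ)) := by
      intro j hj; rw [Finset.mem_Icc] at *; omega
    have hlocQ : LocalOn (Finset.Icc (i - (r0 : ℤ)) (i + (r0 : ℤ)))
        (fun x => c x i ≠ d x i) := by
      intro x y hxy hx
      have h1 : c x i = c y i := hrad_c.local_eq (fun j hj => hxy j hj)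
      have h2 : d x i = d y i := hrad_d.local_eq (fun j hj => hxy j hj)
      rw [← h1, ← h2]
      exact hx
    rw [← natCard_set_eq_card_filter, card_liftSet_subset hsub2 hlocQ]
    have htrans : Nat.card (liftSet (Finset.Icc (i - (r0 : ℤ)) (i + (r0 : ℤ)))
        (fun x => c x i ≠ d x i)) = nD := by
      rw [show i - (r0 : ℤ) = -(r0 : ℤ) + i by ring, show i + (r0 : ℤ) = (r0 : ℤ) + i by ring,
        card_liftSet_translate i (-(r0 : ℤ)) ((r0 : ℤ)) (fun x => c x i ≠ d x i)]
      have hset : liftSet (Finset.Icc (-(r0 : ℤ)) (r0 : ℤ))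
          (fun x => c (fun j => x (j - i)) i ≠ d (fun j => x (j - i)) i)
          = liftSet (Finset.Icc (-(r0 : ℤ)) (r0 : ℤ)) (fun x => c x 0 ≠ d x 0) := by
        apply liftSet_congr
        intro x
        have keyc : c (fun j' => x (j' - i)) i = c x 0 := by
          have e : (fun j' => x (j' - i)) = fun j' => x (-i + j') := by
            funext j'; congr 1; ring
          rw [e, hrad_c.shift_apply]
          congr 1; ring
        have keyd : d (fun j' => x (j' - i)) i = d x 0 := by
          have e : (fun j' => x (j' - i)) = fun j' => x (-i + j') := by
            funext j'; congr 1; ring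
          rw [e, hrad_d.shift_apply]
          congr 1; ring
        rw [keyc, keyd]
      rw [hset, hnD]
    rw [htrans]
    have he2 : (Finset.Icc (-(m : ℤ) - (r0 : ℤ)) ((m : ℤ) + (r0 : ℤ))).card
        - (Finset.Icc (i - (r0 : ℤ)) (i + (r0 : ℤ))).card = 2 * m := by
      rw [Int.card_Icc, Int.card_Icc]; omega
    rw [he2, hq]
  -- the main counting inequality
  have hmain : nB * q ^ (2 * r0) ≤ (2 * rc' + 1) * (nD * q ^ (2 * m)) := by
    calc nB * q ^ (2 * r0)
        = (Finset.univ.filter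
            (· ∈ liftSet (Finset.Icc (-(m : ℤ) - (r0 : ℤ)) ((m : ℤ) + (r0 : ℤ)))
              (fun x => P (d x)))).card := hPreB.symm
      _ ≤ ((Finset.Icc (-(rc' : ℤ)) (rc' : ℤ)).biUnion (fun i =>
            Finset.univ.filter
              (· ∈ liftSet (Finset.Icc (-(m : ℤ) - (r0 : ℤ)) ((m : ℤ) + (r0 : ℤ)))
                (fun x => c x i ≠ d x i)))).card := Finset.card_le_card hcover
      _ ≤ ∑ i ∈ Finset.Icc (-(rc' : ℤ)) (rc' : ℤ),
            (Finset.univ.filter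
              (· ∈ liftSet (Finset.Icc (-(m : ℤ) - (r0 : ℤ)) ((m : ℤ) + (r0 : ℤ)))
                (fun x => c x i ≠ d x i))).card := Finset.card_biUnion_le
      _ = ∑ _i ∈ Finset.Icc (-(rc' : ℤ)) (rc' : ℤ), nD * q ^ (2 * m) :=
            Finset.sum_congr rfl hTi
      _ = (2 * rc' + 1) * (nD * q ^ (2 * m)) := by
            rw [Finset.sum_const, smul_eq_mul, Int.card_Icc]
            congr 1
            omega
  -- the natural-number form of the target inequality
  have htarget : nB' * q ^ (2 * r0 + 1) ≤ (2 * rc' + 1) * nD * q ^ (2 * rd' + 1) := by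
    have hqpos : 0 < q := by omega
    have hpos : 0 < q ^ (2 * (m - rd')) := Nat.pow_pos hqpos
    apply Nat.le_of_mul_le_mul_right _ hpos
    have hpow1 : q ^ (2 * r0 + 1) = q ^ (2 * r0) * q := pow_succ q (2 * r0)
    have hpow2 : q ^ (2 * m) * q = q ^ (2 * rd' + 1) * q ^ (2 * (m - rd')) := by
      rw [← pow_succ, ← pow_add]
      congr 1
      omega
    calc nB' * q ^ (2 * r0 + 1) * q ^ (2 * (m - rd'))
        = (nB' * q ^ (2 * (m - rd')) * q ^ (2 * r0)) * q := by rw [hpow1]; ring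
      _ = (nB * q ^ (2 * r0)) * q := by rw [hBB']
      _ ≤ ((2 * rc' + 1) * (nD * q ^ (2 * m))) * q := Nat.mul_le_mul_right q hmain
      _ = (2 * rc' + 1) * nD * (q ^ (2 * m) * q) := by ring
      _ = (2 * rc' + 1) * nD * (q ^ (2 * rd' + 1) * q ^ (2 * (m - rd'))) := by rw [hpow2]
      _ = (2 * rc' + 1) * nD * q ^ (2 * rd' + 1) * q ^ (2 * (m - rd')) := by ring
  -- conclude in the reals
  have hcard1 : (diffSet rd' (Function.invFun c) (Function.invFun d)).ncard = nB' := by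
    rw [hnB', ← Nat.card_coe_set_eq, diffSet_eq_liftSet, ← hP]; rfl
  have hcard2 : (diffSet r0 c d).ncard = nD := by
    rw [hnD, ← Nat.card_coe_set_eq, diffSet_eq_liftSet]; rfl
  have hdelta1 : delta (Function.invFun c) (Function.invFun d)
      = (nB' : ℝ) / (q : ℝ) ^ (2 * rd' + 1) := by
    simp only [delta, deltaR]
    rw [← hrc', ← hrd', ← hq, max_eq_right hr'.le, hcard1]
  have hdelta2 : delta c d = (nD : ℝ) / (q : ℝ) ^ (2 * r0 + 1) := by
    simp only [delta, deltaR]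
    rw [← hr0, ← hq, max_eq_right hr.le, hcard2]
  rw [hdelta1, hdelta2]
  have hqR : (0 : ℝ) < (q : ℝ) := by
    have h0 : 0 < q := by omega
    exact_mod_cast h0
  have hR : (2 * (rc' : ℝ) + 1) * ((nD : ℝ) / (q : ℝ) ^ (2 * r0 + 1))
      = ((2 * (rc' : ℝ) + 1) * (nD : ℝ)) / (q : ℝ) ^ (2 * r0 + 1) := by ring
  rw [hR, div_le_div_iff₀ (by positivity) (by positivity)]
  calc (nB' : ℝ) * (q : ℝ) ^ (2 * r0 + 1)
      = ((nB' * q ^ (2 * r0 + 1) : ℕ) : ℝ) := by push_cast; ring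
    _ ≤ (((2 * rc' + 1) * nD * q ^ (2 * rd' + 1) : ℕ) : ℝ) := by exact_mod_cast htarget
    _ = (2 * (rc' : ℝ) + 1) * (nD : ℝ) * (q : ℝ) ^ (2 * rd' + 1) := by push_cast; ring
end
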